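/- arXiv:0802.1565 — 5 statements merged into one kernel-verified Lean document; each statement's English description precedes it below -/
import Mathlib

section
/- For any integer k ≥ 3, the double zeta value satisfies Euler's formula: 2·ζ(k-1,1) = (k-1)·ζ(k) - Σ_{j=2}^{k-2} ζ(j)·ζ(k-j). -/
/-- Riemann zeta value ζ(j) = ∑_{m≥1} 1/m^j. -/
noncomputable def rz (j : ℕ) : ℝ := ∑' n : ℕ, 1 / ((n : ℝ) + 1) ^ j

/-- Double zeta value ζ(q,p) = ∑_{n>m>0} 1/(n^q m^p). -/
noncomputable def dz (q p : ℕ) : ℝ :=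
  ∑' x : ℕ × ℕ, 1 / (((x.1 : ℝ) + (x.2 : ℝ) + 2) ^ q * ((x.2 : ℝ) + 1) ^ p)

/-- Tornheim double series T(r,q,p) = ∑_{n,m>0} 1/((n+m)^r n^q m^p). -/
noncomputable def T (r q p : ℕ) : ℝ :=
  ∑' x : ℕ × ℕ,
    1 / (((x.1 : ℝ) + (x.2 : ℝ) + 2) ^ r * ((x.1 : ℝ) + 1) ^ q * ((x.2 : ℝ) + 1) ^ p)

open Finset Filter Topology

/- ### Summability basics -/

lemma summable_g : Summable (fun n : ℕ => (((n : ℝ) + 1) ^ ((3:ℝ)/2))⁻¹) := by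
  have h1 : Summable (fun n : ℕ => 1 / (n : ℝ) ^ ((3:ℝ)/2)) :=
    Real.summable_one_div_nat_rpow.mpr (by norm_num)
  have h2 := (summable_nat_add_iff 1).mpr h1
  apply h2.congr
  intro n
  push_cast
  rw [one_div]

lemma key_ineq (n m : ℝ) (hn : 1 ≤ n) (hm : 1 ≤ m) {a b c : ℕ}
    (ha : 1 ≤ a) (hab : 2 ≤ a + b) (hc : 1 ≤ c) :
    n ^ ((3:ℝ)/2) * m ^ ((3:ℝ)/2) ≤ (n + m) ^ a * n ^ b * m ^ c := by
  have hn0 : (0:ℝ) < n := lt_of_lt_of_le one_pos hn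
  have hm0 : (0:ℝ) < m := lt_of_lt_of_le one_pos hm
  have h32 : ((3:ℝ)/2) = 1 + 1/2 := by norm_num
  have hrn : n ^ ((3:ℝ)/2) = n * Real.sqrt n := by
    rw [h32, Real.rpow_add hn0, Real.rpow_one, Real.sqrt_eq_rpow]
  have hrm : m ^ ((3:ℝ)/2) = m * Real.sqrt m := by
    rw [h32, Real.rpow_add hm0, Real.rpow_one, Real.sqrt_eq_rpow]
  have hsq : Real.sqrt n * Real.sqrt m ≤ n + m := by
    rw [← Real.sqrt_mul hn0.le]
    have h1 : n * m ≤ (n + m) ^ 2 := by nlinarith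
    calc Real.sqrt (n * m) ≤ Real.sqrt ((n + m) ^ 2) := Real.sqrt_le_sqrt h1
      _ = n + m := Real.sqrt_sq (by positivity)
  -- step 1 : small ≤ (n+m) * n * m
  have step1 : n ^ ((3:ℝ)/2) * m ^ ((3:ℝ)/2) ≤ (n + m) * n * m := by
    rw [hrn, hrm]
    have hs : 0 ≤ Real.sqrt n * Real.sqrt m := by positivity
    calc n * Real.sqrt n * (m * Real.sqrt m) = (Real.sqrt n * Real.sqrt m) * (n * m) := by ring
      _ ≤ (n + m) * (n * m) := by
          apply mul_le_mul_of_nonneg_right hsq (by positivity)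
      _ = (n + m) * n * m := by ring
  refine step1.trans ?_
  -- step 2 : (n+m) * n * m ≤ (n+m)^a * n^b * m^c
  obtain ⟨a', rfl⟩ : ∃ a', a = a' + 1 := ⟨a - 1, by omega⟩
  have hnm : n ≤ n + m := by linarith
  have h1 : (n + m) ^ (a' + 1) * n ^ b = (n + m) * ((n + m) ^ a' * n ^ b) := by ring
  have h2 : n ^ a' * n ^ b = n ^ (a' + b) := by rw [pow_add]
  have h3 : n ≤ n ^ (a' + b) := by
    calc n = n ^ 1 := (pow_one n).symm
      _ ≤ n ^ (a' + b) := pow_le_pow_right₀ hn (by omega)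
  have h4 : m ≤ m ^ c := by
    calc m = m ^ 1 := (pow_one m).symm
      _ ≤ m ^ c := pow_le_pow_right₀ hm (by omega)
  have h5 : n ^ (a' + b) ≤ (n + m) ^ a' * n ^ b := by
    rw [pow_add]
    exact mul_le_mul_of_nonneg_right (pow_le_pow_left₀ hn0.le hnm a') (by positivity)
  calc (n + m) * n * m ≤ (n + m) * n ^ (a' + b) * m ^ c := by
        apply mul_le_mul (mul_le_mul_of_nonneg_left h3 (by positivity)) h4 hm0.le (by positivity)
    _ ≤ (n + m) * ((n + m) ^ a' * n ^ b) * m ^ c := by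
        apply mul_le_mul_of_nonneg_right (mul_le_mul_of_nonneg_left h5 (by positivity)) (by positivity)
    _ = (n + m) ^ (a' + 1) * n ^ b * m ^ c := by ring

lemma summable_T_aux {a b c : ℕ} (ha : 1 ≤ a) (hab : 2 ≤ a + b) (hc : 1 ≤ c) :
    Summable (fun x : ℕ × ℕ =>
      1 / (((x.1 : ℝ) + (x.2 : ℝ) + 2) ^ a * ((x.1 : ℝ) + 1) ^ b * ((x.2 : ℝ) + 1) ^ c)) := by
  refine Summable.of_nonneg_of_le (fun x => by positivity) (fun x => ?_)
    (summable_g.mul_of_nonneg summable_g (fun n => by positivity) (fun n => by positivity))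
  have hN : (x.1 : ℝ) + (x.2 : ℝ) + 2 = ((x.1 : ℝ) + 1) + ((x.2 : ℝ) + 1) := by ring
  rw [one_div, ← mul_inv, hN]
  exact inv_anti₀ (by positivity)
    (key_ineq ((x.1:ℝ)+1) ((x.2:ℝ)+1) (le_add_of_nonneg_left (Nat.cast_nonneg _)) (le_add_of_nonneg_left (Nat.cast_nonneg _)) ha hab hc)

lemma summable_dz {q p : ℕ} (hq : 2 ≤ q) (hp : 1 ≤ p) :
    Summable (fun x : ℕ × ℕ =>
      1 / (((x.1 : ℝ) + (x.2 : ℝ) + 2) ^ q * ((x.2 : ℝ) + 1) ^ p)) := by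
  have := summable_T_aux (a := q) (b := 0) (c := p) (by omega) (by omega) hp
  simpa using this

lemma summable_T10 {s : ℕ} (hs : 2 ≤ s) :
    Summable (fun x : ℕ × ℕ => 1 / (((x.1 : ℝ) + (x.2 : ℝ) + 2) ^ s * ((x.1 : ℝ) + 1))) := by
  have h := summable_dz (p := 1) hs le_rfl
  have h2 := (Equiv.prodComm ℕ ℕ).summable_iff.mpr h
  apply h2.congr
  intro x
  simp only [Function.comp, Equiv.prodComm_apply, Prod.fst_swap, Prod.snd_swap, Prod.swap]
  ring_nf

lemma summable_rz {j : ℕ} (hj : 2 ≤ j) : Summable (fun n : ℕ => 1 / ((n : ℝ) + 1) ^ j) := by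
  have h1 : Summable (fun n : ℕ => 1 / (n : ℝ) ^ j) :=
    Real.summable_one_div_nat_pow.mpr (by omega)
  have h2 := (summable_nat_add_iff 1).mpr h1
  apply h2.congr
  intro n
  push_cast
  ring

lemma split_frac (A B : ℝ) (hA : 0 < A) (hB : 0 < B) (r p : ℕ) :
    1 / ((A + B) ^ r * A * B ^ (p + 1))
      = 1 / ((A + B) ^ (r + 1) * B ^ (p + 1)) + 1 / ((A + B) ^ (r + 1) * A * B ^ p) := by
  have hAB : (0:ℝ) < A + B := by linarith
  field_simp
  ring

lemma T_step (r p : ℕ) (hr : 1 ≤ r) : T r 1 (p + 1) = dz (r + 1) (p + 1) + T (r + 1) 1 p := by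
  have hf : Summable (fun x : ℕ × ℕ =>
      1 / (((x.1 : ℝ) + (x.2 : ℝ) + 2) ^ (r + 1) * ((x.2 : ℝ) + 1) ^ (p + 1))) :=
    summable_dz (by omega) (by omega)
  have hg : Summable (fun x : ℕ × ℕ =>
      1 / (((x.1 : ℝ) + (x.2 : ℝ) + 2) ^ (r + 1) * ((x.1 : ℝ) + 1) ^ 1 * ((x.2 : ℝ) + 1) ^ p)) := by
    rcases Nat.eq_zero_or_pos p with hp | hp
    · subst hp
      have := summable_T10 (s := r + 1) (by omega)
      apply this.congr
      intro x
      simp [pow_one]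
    · exact summable_T_aux (by omega) (by omega) hp
  rw [T, dz, T, ← Summable.tsum_add hf hg]
  apply tsum_congr
  intro x
  have hN : (x.1 : ℝ) + (x.2 : ℝ) + 2 = ((x.1 : ℝ) + 1) + ((x.2 : ℝ) + 1) := by ring
  rw [hN, pow_one]
  exact split_frac _ _ (by positivity) (by positivity) r p

lemma T_last {s : ℕ} : T s 1 0 = dz s 1 := by
  rw [T, dz]
  rw [← (Equiv.prodComm ℕ ℕ).tsum_eq
    (fun y : ℕ × ℕ => 1 / (((y.1 : ℝ) + (y.2 : ℝ) + 2) ^ s * ((y.2 : ℝ) + 1) ^ 1))]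
  apply tsum_congr
  intro x
  simp only [Equiv.prodComm_apply, Prod.fst_swap, Prod.snd_swap, pow_zero, pow_one]
  ring_nf

lemma T_telescope (p : ℕ) : ∀ r : ℕ, 1 ≤ r →
    T r 1 (p + 1) = (∑ j ∈ Finset.Icc (r + 1) (r + p + 1), dz j (r + p + 2 - j))
      + T (r + p + 1) 1 0 := by
  induction p with
  | zero =>
    intro r hr
    rw [T_step r 0 hr]
    have : Finset.Icc (r + 1) (r + 0 + 1) = {r + 1} := by
      rw [Finset.Icc_self]
    rw [this, Finset.sum_singleton, show r + 0 + 2 - (r + 1) = 1 from by omega]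
  | succ p ih =>
    intro r hr
    rw [T_step r (p + 1) hr, ih (r + 1) (by omega)]
    have hset : Finset.Icc (r + 1) (r + (p + 1) + 1)
        = insert (r + 1) (Finset.Icc (r + 1 + 1) (r + 1 + p + 1)) := by
      ext j
      simp only [Finset.mem_Icc, Finset.mem_insert]
      omega
    rw [hset, Finset.sum_insert (by simp only [Finset.mem_Icc]; omega)]
    rw [show r + (p + 1) + 2 - (r + 1) = p + 2 from by omega]
    have hsum : (∑ j ∈ Finset.Icc (r + 1 + 1) (r + 1 + p + 1), dz j (r + 1 + p + 2 - j))
        = ∑ j ∈ Finset.Icc (r + 2) (r + (p + 1) + 1), dz j (r + (p + 1) + 2 - j) := by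
      apply Finset.sum_congr
      · congr 1 <;> omega
      · intro j _
        congr 1
        omega
    rw [hsum, show r + 1 + p + 1 = r + (p + 1) + 1 from by omega]
    ring

/- ### Harmonic numbers and the evaluation of T 1 1 p -/

noncomputable def H (m : ℕ) : ℝ := ∑ i ∈ Finset.range m, 1 / ((i : ℝ) + 1)

lemma harm_partial (m : ℕ) : ∀ K : ℕ,
    ∑ i ∈ Finset.range K, (1 / ((i : ℝ) + 1) - 1 / ((i : ℝ) + (m : ℝ) + 1))
      = H m - ∑ i ∈ Finset.range m, 1 / ((i : ℝ) + (K : ℝ) + 1) := by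
  intro K
  induction K with
  | zero => simp [H]
  | succ K ih =>
    rw [Finset.sum_range_succ, ih]
    have tele : ∑ i ∈ Finset.range m, 1 / ((i:ℝ) + (K:ℝ) + 1)
          - ∑ i ∈ Finset.range m, 1 / ((i:ℝ) + ((K:ℝ) + 1) + 1)
        = 1 / ((K:ℝ) + 1) - 1 / ((K:ℝ) + (m:ℝ) + 1) := by
      rw [← Finset.sum_sub_distrib]
      calc ∑ i ∈ Finset.range m, (1 / ((i:ℝ) + (K:ℝ) + 1) - 1 / ((i:ℝ) + ((K:ℝ) + 1) + 1))
          = ∑ i ∈ Finset.range m, ((fun j : ℕ => 1 / ((j:ℝ) + (K:ℝ) + 1)) i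
              - (fun j : ℕ => 1 / ((j:ℝ) + (K:ℝ) + 1)) (i + 1)) := by
            apply Finset.sum_congr rfl
            intro i _
            push_cast
            ring_nf
        _ = 1 / (((0:ℕ):ℝ) + (K:ℝ) + 1) - 1 / ((m:ℝ) + (K:ℝ) + 1) :=
            Finset.sum_range_sub' (fun j : ℕ => 1 / ((j:ℝ) + (K:ℝ) + 1)) m
        _ = 1 / ((K:ℝ) + 1) - 1 / ((K:ℝ) + (m:ℝ) + 1) := by
            push_cast
            ring_nf
    push_cast
    linarith [tele]

lemma hasSum_harm (m : ℕ) :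
    HasSum (fun i : ℕ => 1 / ((i : ℝ) + 1) - 1 / ((i : ℝ) + (m : ℝ) + 1)) (H m) := by
  rw [hasSum_iff_tendsto_nat_of_nonneg]
  · have heq : ∀ K : ℕ, ∑ i ∈ Finset.range K,
        (1 / ((i : ℝ) + 1) - 1 / ((i : ℝ) + (m : ℝ) + 1))
        = H m - ∑ i ∈ Finset.range m, 1 / ((i : ℝ) + (K : ℝ) + 1) := harm_partial m
    simp_rw [heq]
    have : Filter.Tendsto (fun K : ℕ => ∑ i ∈ Finset.range m, 1 / ((i : ℝ) + (K : ℝ) + 1))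
        Filter.atTop (nhds 0) := by
      have h0 : (0:ℝ) = ∑ _i ∈ Finset.range m, (0:ℝ) := by simp
      rw [h0]
      apply tendsto_finset_sum
      intro i _
      have hcomp := (tendsto_one_div_add_atTop_nhds_zero_nat (𝕜 := ℝ)).comp (tendsto_add_atTop_nat i)
      apply hcomp.congr
      intro K
      simp only [Function.comp]
      push_cast
      ring_nf
    have := (tendsto_const_nhds (x := H m) (f := Filter.atTop (α := ℕ))).sub this
    simpa using this
  · intro i
    have h1 : (0:ℝ) < (i : ℝ) + 1 := by positivity
    have h2 : (i : ℝ) + 1 ≤ (i : ℝ) + (m : ℝ) + 1 := by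
      have : (0:ℝ) ≤ (m : ℝ) := Nat.cast_nonneg m
      linarith
    have := one_div_le_one_div_of_le h1 h2
    linarith

lemma hasSum_inner (p : ℕ) (x2 : ℕ) :
    HasSum (fun x1 : ℕ =>
        1 / (((x1 : ℝ) + (x2 : ℝ) + 2) ^ 1 * ((x1 : ℝ) + 1) ^ 1 * ((x2 : ℝ) + 1) ^ p))
      (H (x2 + 1) / ((x2 : ℝ) + 1) ^ (p + 1)) := by
  have h := (hasSum_harm (x2 + 1)).mul_left (1 / ((x2 : ℝ) + 1) ^ (p + 1))
  have heq : ∀ x1 : ℕ,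
      1 / ((x2 : ℝ) + 1) ^ (p + 1) * (1 / ((x1 : ℝ) + 1) - 1 / ((x1 : ℝ) + ((x2 + 1 : ℕ) : ℝ) + 1))
        = 1 / (((x1 : ℝ) + (x2 : ℝ) + 2) ^ 1 * ((x1 : ℝ) + 1) ^ 1 * ((x2 : ℝ) + 1) ^ p) := by
    intro x1
    have h1 : (0:ℝ) < (x1 : ℝ) + 1 := by positivity
    have h2 : (0:ℝ) < (x2 : ℝ) + 1 := by positivity
    have h3 : (0:ℝ) < (x1 : ℝ) + (x2 : ℝ) + 2 := by positivity
    push_cast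
    rw [pow_one, pow_one, pow_succ]
    field_simp
    ring
  rw [show H (x2 + 1) / ((x2 : ℝ) + 1) ^ (p + 1)
      = 1 / ((x2 : ℝ) + 1) ^ (p + 1) * H (x2 + 1) from by ring]
  exact h.congr_fun (fun x1 => (heq x1).symm)

lemma T11_eq (p : ℕ) (hp : 1 ≤ p) :
    T 1 1 p = ∑' x2 : ℕ, H (x2 + 1) / ((x2 : ℝ) + 1) ^ (p + 1)
      ∧ Summable (fun x2 : ℕ => H (x2 + 1) / ((x2 : ℝ) + 1) ^ (p + 1)) := by
  set f : ℕ × ℕ → ℝ := fun x =>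
    1 / (((x.1 : ℝ) + (x.2 : ℝ) + 2) ^ 1 * ((x.1 : ℝ) + 1) ^ 1 * ((x.2 : ℝ) + 1) ^ p) with hfdef
  have hf : Summable f := summable_T_aux le_rfl le_rfl hp
  have hf' : Summable (f ∘ (Equiv.prodComm ℕ ℕ)) := (Equiv.prodComm ℕ ℕ).summable_iff.mpr hf
  have h0 : (0:ℕ×ℕ→ℝ) ≤ f ∘ (Equiv.prodComm ℕ ℕ) := by
    intro x
    simp only [hfdef, Function.comp, Pi.zero_apply]
    positivity
  have hTeq : T 1 1 p = ∑' y : ℕ × ℕ, (f ∘ (Equiv.prodComm ℕ ℕ)) y := by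
    rw [T]
    exact ((Equiv.prodComm ℕ ℕ).tsum_eq f).symm
  have hinner : ∀ x2 : ℕ, ∑' x1 : ℕ, (f ∘ (Equiv.prodComm ℕ ℕ)) (x2, x1)
      = H (x2 + 1) / ((x2 : ℝ) + 1) ^ (p + 1) := by
    intro x2
    have : ∀ x1 : ℕ, (f ∘ (Equiv.prodComm ℕ ℕ)) (x2, x1) = f (x1, x2) := fun _ => rfl
    simp_rw [this]
    exact (hasSum_inner p x2).tsum_eq
  constructor
  · rw [hTeq, Summable.tsum_prod hf']
    exact tsum_congr hinner
  · have := ((summable_prod_of_nonneg h0).mp hf').2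
    apply this.congr
    intro x2
    exact hinner x2

/- ### Partition helpers for tsums over ℕ × ℕ -/

lemma tsum_lower (g : ℕ × ℕ → ℝ) :
    ∑' z : ℕ × ℕ, (if z.2 < z.1 then g z else 0)
      = ∑' x : ℕ × ℕ, g (x.1 + x.2 + 1, x.2) := by
  have hinj : Function.Injective (fun x : ℕ × ℕ => ((x.1 + x.2 + 1, x.2) : ℕ × ℕ)) := by
    intro x y h
    simp only [Prod.mk.injEq] at h
    obtain ⟨h1, h2⟩ := h
    obtain ⟨x1, x2⟩ := x
    obtain ⟨y1, y2⟩ := y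
    simp only [Prod.mk.injEq]
    simp only at h1 h2
    omega
  have hsupp : Function.support (fun z : ℕ × ℕ => if z.2 < z.1 then g z else 0)
      ⊆ Set.range (fun x : ℕ × ℕ => ((x.1 + x.2 + 1, x.2) : ℕ × ℕ)) := by
    intro z hz
    simp only [Function.mem_support] at hz
    by_cases h : z.2 < z.1
    · refine ⟨(z.1 - z.2 - 1, z.2), ?_⟩
      obtain ⟨z1, z2⟩ := z
      simp only at h
      simp only [Prod.mk.injEq, true_and, and_true]
      omega
    · simp [h] at hz
  rw [← Function.Injective.tsum_eq hinj hsupp]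
  apply tsum_congr
  intro x
  simp only
  rw [if_pos (by omega : x.2 < x.1 + x.2 + 1)]

lemma tsum_upper (g : ℕ × ℕ → ℝ) :
    ∑' z : ℕ × ℕ, (if z.1 < z.2 then g z else 0)
      = ∑' x : ℕ × ℕ, g (x.2, x.1 + x.2 + 1) := by
  have hinj : Function.Injective (fun x : ℕ × ℕ => ((x.2, x.1 + x.2 + 1) : ℕ × ℕ)) := by
    intro x y h
    simp only [Prod.mk.injEq] at h
    obtain ⟨h1, h2⟩ := h
    obtain ⟨x1, x2⟩ := x
    obtain ⟨y1, y2⟩ := y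
    simp only [Prod.mk.injEq]
    simp only at h1 h2
    omega
  have hsupp : Function.support (fun z : ℕ × ℕ => if z.1 < z.2 then g z else 0)
      ⊆ Set.range (fun x : ℕ × ℕ => ((x.2, x.1 + x.2 + 1) : ℕ × ℕ)) := by
    intro z hz
    simp only [Function.mem_support] at hz
    by_cases h : z.1 < z.2
    · refine ⟨(z.2 - z.1 - 1, z.1), ?_⟩
      obtain ⟨z1, z2⟩ := z
      simp only at h
      simp only [Prod.mk.injEq, true_and, and_true]
      omega
    · simp [h] at hz
  rw [← Function.Injective.tsum_eq hinj hsupp]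
  apply tsum_congr
  intro x
  simp only
  rw [if_pos (by omega : x.2 < x.1 + x.2 + 1)]

lemma tsum_diag (g : ℕ → ℝ) :
    ∑' z : ℕ × ℕ, (if z.1 = z.2 then g z.1 else 0) = ∑' n : ℕ, g n := by
  have hinj : Function.Injective (fun n : ℕ => ((n, n) : ℕ × ℕ)) := by
    intro x y h
    have := congrArg Prod.fst h
    simpa using this
  have hsupp : Function.support (fun z : ℕ × ℕ => if z.1 = z.2 then g z.1 else 0)
      ⊆ Set.range (fun n : ℕ => ((n, n) : ℕ × ℕ)) := by
    intro z hz
    simp only [Function.mem_support] at hz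
    by_cases h : z.1 = z.2
    · exact ⟨z.1, by obtain ⟨z1, z2⟩ := z; simp only at h; simp [h]⟩
    · simp [h] at hz
  rw [← Function.Injective.tsum_eq hinj hsupp]
  apply tsum_congr
  intro n
  simp

lemma tsum_H_eq (q : ℕ) (hq : 2 ≤ q)
    (hsum : Summable (fun x2 : ℕ => H (x2 + 1) / ((x2 : ℝ) + 1) ^ q)) :
    ∑' x2 : ℕ, H (x2 + 1) / ((x2 : ℝ) + 1) ^ q = dz q 1 + rz (q + 1) := by
  set c : ℕ × ℕ → ℝ := fun z =>
    if z.2 < z.1 + 1 then 1 / ((z.2 : ℝ) + 1) * (1 / ((z.1 : ℝ) + 1) ^ q) else 0 with hcdef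
  have hc0 : ∀ z, 0 ≤ c z := by
    intro z
    simp only [hcdef]
    split
    · positivity
    · exact le_refl 0
  have hslice : ∀ a : ℕ, ∀ b ∉ Finset.range (a + 1), c (a, b) = 0 := by
    intro a b hb
    simp only [Finset.mem_range] at hb
    simp only [hcdef]
    rw [if_neg (by omega)]
  have hinner : ∀ a : ℕ, ∑' b : ℕ, c (a, b) = H (a + 1) / ((a : ℝ) + 1) ^ q := by
    intro a
    rw [tsum_eq_sum (hslice a)]
    have : ∀ b ∈ Finset.range (a + 1),
        c (a, b) = 1 / ((b : ℝ) + 1) * (1 / ((a : ℝ) + 1) ^ q) := by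
      intro b hb
      simp only [Finset.mem_range] at hb
      simp only [hcdef]
      rw [if_pos (by omega)]
    rw [Finset.sum_congr rfl this, ← Finset.sum_mul, H]
    rw [mul_one_div]
  have hc : Summable c := by
    apply (summable_prod_of_nonneg hc0).mpr
    constructor
    · intro a
      exact summable_of_ne_finset_zero (hslice a)
    · apply hsum.congr
      intro a
      exact (hinner a).symm
  have hL : ∑' x2 : ℕ, H (x2 + 1) / ((x2 : ℝ) + 1) ^ q = ∑' z : ℕ × ℕ, c z := by
    rw [Summable.tsum_prod hc]
    exact (tsum_congr hinner).symm
  -- split into strict and diagonal parts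
  set c1 : ℕ × ℕ → ℝ := fun z =>
    if z.2 < z.1 then 1 / ((z.2 : ℝ) + 1) * (1 / ((z.1 : ℝ) + 1) ^ q) else 0 with hc1def
  set c2 : ℕ × ℕ → ℝ := fun z =>
    if z.1 = z.2 then 1 / ((z.1 : ℝ) + 1) ^ (q + 1) else 0 with hc2def
  have hsplit : ∀ z, c z = c1 z + c2 z := by
    intro z
    simp only [hcdef, hc1def, hc2def]
    rcases lt_trichotomy z.2 z.1 with h | h | h
    · rw [if_pos (by omega), if_pos h, if_neg (by omega)]
      ring
    · rw [if_pos (by omega), if_neg (by omega), if_pos (by omega)]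
      have hz : (0:ℝ) < (z.1 : ℝ) + 1 := by positivity
      rw [← h, pow_succ]
      rw [one_div_mul_one_div]
      ring_nf
    · rw [if_neg (by omega), if_neg (by omega), if_neg (by omega)]
      ring
  have hc10 : ∀ z, 0 ≤ c1 z := by
    intro z
    simp only [hc1def]
    split
    · positivity
    · exact le_refl 0
  have hle : ∀ z, c1 z ≤ c z := by
    intro z
    rw [hsplit z]
    have : 0 ≤ c2 z := by
      simp only [hc2def]
      split
      · positivity
      · exact le_refl 0
    linarith
  have hc1s : Summable c1 := Summable.of_nonneg_of_le hc10 hle hc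
  have hc2s : Summable c2 := by
    have := hc.sub hc1s
    apply this.congr
    intro z
    rw [hsplit z]
    ring
  have hsum_split : ∑' z : ℕ × ℕ, c z = (∑' z : ℕ × ℕ, c1 z) + ∑' z : ℕ × ℕ, c2 z := by
    rw [← Summable.tsum_add hc1s hc2s]
    exact tsum_congr hsplit
  have hdz : ∑' z : ℕ × ℕ, c1 z = dz q 1 := by
    rw [hc1def, tsum_lower, dz]
    apply tsum_congr
    intro x
    simp only
    push_cast
    rw [pow_one, one_div_mul_one_div]
    ring_nf
  have hrz : ∑' z : ℕ × ℕ, c2 z = rz (q + 1) := by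
    rw [hc2def, rz]
    exact tsum_diag (fun n : ℕ => 1 / ((n : ℝ) + 1) ^ (q + 1))
  rw [hL, hsum_split, hdz, hrz]

/- ### The sum theorem : ∑_{j=2}^{k-1} ζ(j, k-j) = ζ(k) -/

lemma sum_thm (t : ℕ) :
    ∑ j ∈ Finset.Icc 2 (t + 2), dz j (t + 3 - j) = rz (t + 3) := by
  have htel := T_telescope t 1 le_rfl
  have hIcc : Finset.Icc (1 + 1) (1 + t + 1) = Finset.Icc 2 (t + 2) := by
    congr 1
    omega
  rw [hIcc] at htel
  have hbody : ∀ j ∈ Finset.Icc 2 (t + 2), dz j (1 + t + 2 - j) = dz j (t + 3 - j) := by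
    intro j _
    congr 1
    omega
  rw [Finset.sum_congr rfl hbody] at htel
  have hlast : T (1 + t + 1) 1 0 = dz (t + 2) 1 := by
    rw [show 1 + t + 1 = t + 2 from by omega]
    exact T_last
  rw [hlast] at htel
  have heval : T 1 1 (t + 1) = dz (t + 1 + 1) 1 + rz (t + 1 + 1 + 1) := by
    obtain ⟨hT, hS⟩ := T11_eq (t + 1) (by omega)
    rw [hT]
    exact tsum_H_eq (t + 1 + 1) (by omega) hS
  rw [show t + 1 + 1 = t + 2 from by omega, show t + 2 + 1 = t + 3 from by omega] at heval
  rw [heval] at htel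
  linarith [htel]

/- ### Stuffle : ζ(a)ζ(b) = ζ(a,b) + ζ(b,a) + ζ(a+b) -/

set_option maxHeartbeats 1000000 in
lemma stuffle (a b : ℕ) (ha : 2 ≤ a) (hb : 2 ≤ b) :
    rz a * rz b = dz a b + dz b a + rz (a + b) := by
  set P : ℕ × ℕ → ℝ := fun x => 1 / ((x.1 : ℝ) + 1) ^ a * (1 / ((x.2 : ℝ) + 1) ^ b) with hPdef
  have hP : Summable P :=
    (summable_rz ha).mul_of_nonneg (summable_rz hb)
      (fun n => by positivity) (fun n => by positivity)
  have hprod : rz a * rz b = ∑' z : ℕ × ℕ, P z := by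
    rw [rz, rz]
    exact Summable.tsum_mul_tsum (summable_rz ha) (summable_rz hb) hP
  set P1 : ℕ × ℕ → ℝ := fun z => if z.2 < z.1 then P z else 0 with hP1def
  set P2 : ℕ × ℕ → ℝ := fun z => if z.1 < z.2 then P z else 0 with hP2def
  set P3 : ℕ × ℕ → ℝ := fun z => if z.1 = z.2 then 1 / ((z.1 : ℝ) + 1) ^ (a + b) else 0
    with hP3def
  have hPz0 : ∀ z, 0 ≤ P z := by
    intro z
    simp only [hPdef]
    positivity
  have hsplit : ∀ z, P z = P1 z + P2 z + P3 z := by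
    intro z
    simp only [hP1def, hP2def, hP3def]
    rcases lt_trichotomy z.2 z.1 with h | h | h
    · rw [if_pos h, if_neg (by omega), if_neg (by omega)]
      ring
    · rw [if_neg (by omega), if_neg (by omega), if_pos (by omega)]
      simp only [hPdef]
      rw [h, one_div_mul_one_div, ← pow_add]
      ring
    · rw [if_neg (by omega), if_pos h, if_neg (by omega)]
      ring
  have h10 : ∀ z, 0 ≤ P1 z := by
    intro z
    simp only [hP1def]
    split
    · exact hPz0 z
    · exact le_refl 0
  have h20 : ∀ z, 0 ≤ P2 z := by
    intro z
    simp only [hP2def]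
    split
    · exact hPz0 z
    · exact le_refl 0
  have h1le : ∀ z, P1 z ≤ P z := by
    intro z
    simp only [hP1def]
    split
    · exact le_refl _
    · exact hPz0 z
  have h2le : ∀ z, P2 z ≤ P z := by
    intro z
    simp only [hP2def]
    split
    · exact le_refl _
    · exact hPz0 z
  have hP1s : Summable P1 := Summable.of_nonneg_of_le h10 h1le hP
  have hP2s : Summable P2 := Summable.of_nonneg_of_le h20 h2le hP
  have hP3s : Summable P3 := by
    have := (hP.sub hP1s).sub hP2s
    apply this.congr
    intro z
    rw [hsplit z]
    ring
  have htsum : ∑' z : ℕ × ℕ, P z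
      = (∑' z : ℕ × ℕ, P1 z) + (∑' z : ℕ × ℕ, P2 z) + ∑' z : ℕ × ℕ, P3 z := by
    rw [← Summable.tsum_add hP1s hP2s, ← Summable.tsum_add (hP1s.add hP2s) hP3s]
    exact tsum_congr hsplit
  have hdz1 : ∑' z : ℕ × ℕ, P1 z = dz a b := by
    rw [hP1def, tsum_lower P, dz]
    apply tsum_congr
    intro x
    simp only [hPdef]
    push_cast
    rw [one_div_mul_one_div]
    ring_nf
  have hdz2 : ∑' z : ℕ × ℕ, P2 z = dz b a := by
    rw [hP2def, tsum_upper P, dz]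
    apply tsum_congr
    intro x
    simp only [hPdef]
    push_cast
    rw [one_div_mul_one_div]
    ring_nf
  have hrz3 : ∑' z : ℕ × ℕ, P3 z = rz (a + b) := by
    rw [hP3def, rz]
    exact tsum_diag (fun n : ℕ => 1 / ((n : ℝ) + 1) ^ (a + b))
  rw [hprod, htsum, hdz1, hdz2, hrz3]

theorem euler_formula (k : ℕ) (hk : 3 ≤ k) :
    2 * dz (k - 1) 1 = ((k : ℝ) - 1) * rz k - ∑ j ∈ Finset.Icc 2 (k - 2), rz j * rz (k - j) := by
  obtain ⟨t, rfl⟩ : ∃ t, k = t + 3 := ⟨k - 3, by omega⟩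
  have hsumthm := sum_thm t
  rw [show t + 3 - 1 = t + 2 from by omega, show t + 3 - 2 = t + 1 from by omega]
  have hins : Finset.Icc 2 (t + 2) = insert (t + 2) (Finset.Icc 2 (t + 1)) := by
    ext j
    simp only [Finset.mem_Icc, Finset.mem_insert]
    omega
  rw [hins, Finset.sum_insert (by simp only [Finset.mem_Icc]; omega),
    show t + 3 - (t + 2) = 1 from by omega] at hsumthm
  have hstuffle : ∀ j ∈ Finset.Icc 2 (t + 1), rz j * rz (t + 3 - j)
      = dz j (t + 3 - j) + dz (t + 3 - j) j + rz (t + 3) := by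
    intro j hj
    simp only [Finset.mem_Icc] at hj
    have h := stuffle j (t + 3 - j) hj.1 (by omega)
    rw [show j + (t + 3 - j) = t + 3 from by omega] at h
    exact h
  rw [Finset.sum_congr rfl hstuffle, Finset.sum_add_distrib, Finset.sum_add_distrib,
    Finset.sum_const]
  have hcard : (Finset.Icc 2 (t + 1)).card = t := by
    rw [Nat.card_Icc]
    omega
  rw [hcard, nsmul_eq_mul]
  have hrefl : ∑ j ∈ Finset.Icc 2 (t + 1), dz (t + 3 - j) j
      = ∑ j ∈ Finset.Icc 2 (t + 1), dz j (t + 3 - j) := by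
    apply Finset.sum_nbij' (fun j => t + 3 - j) (fun j => t + 3 - j)
    · intro a ha
      simp only [Finset.mem_Icc] at ha ⊢
      omega
    · intro a ha
      simp only [Finset.mem_Icc] at ha ⊢
      omega
    · intro a ha
      simp only [Finset.mem_Icc] at ha
      omega
    · intro a ha
      simp only [Finset.mem_Icc] at ha
      omega
    · intro a ha
      simp only [Finset.mem_Icc] at ha
      congr 1
      omega
  rw [hrefl]
  push_cast
  linarith [hsumthm]
end

section
/- Let k be even and let r, q, p ≥ 1 be integers with r + q + p = k and k ≥ 4. Then T(r,q,p) lies in the Q-vector subspace of ℝ spanned by the double zeta values ζ(j, k-j) for 2 ≤ j ≤ r together with ζ(k) and the products ζ(j)·ζ(k-j) for 2 ≤ j ≤ k-2. -/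
namespace Torn

/-- comparison function -/
noncomputable def g (n : ℕ) : ℝ := ((n : ℝ) + 1) ^ (-(3/2) : ℝ)

lemma g_pos (n : ℕ) : 0 < g n := Real.rpow_pos_of_pos (by positivity) _

lemma summable_g : Summable g := by
  have h : Summable (fun n : ℕ => ((n : ℝ)) ^ (-(3/2) : ℝ)) :=
    Real.summable_nat_rpow.mpr (by norm_num)
  have := (summable_nat_add_iff 1).mpr h
  refine this.congr fun n => ?_
  simp [g]

lemma summable_gg : Summable (fun x : ℕ × ℕ => g x.1 * g x.2) :=
  summable_g.mul_of_nonneg summable_g (fun n => (g_pos n).le) (fun n => (g_pos n).le)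

lemma key32 (n : ℕ) : ((n : ℝ) + 1) ^ ((3/2) : ℝ) * g n = 1 := by
  rw [g, ← Real.rpow_add (by positivity)]
  norm_num

end Torn

namespace Torn

noncomputable def Tf (r q p : ℕ) (x : ℕ × ℕ) : ℝ :=
  1 / (((x.1 : ℝ) + (x.2 : ℝ) + 2) ^ r * ((x.1 : ℝ) + 1) ^ q * ((x.2 : ℝ) + 1) ^ p)

lemma T_eq (r q p : ℕ) : T r q p = ∑' x : ℕ × ℕ, Tf r q p x := rfl

noncomputable def Df (q p : ℕ) (x : ℕ × ℕ) : ℝ :=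
  1 / (((x.1 : ℝ) + (x.2 : ℝ) + 2) ^ q * ((x.2 : ℝ) + 1) ^ p)

lemma dz_eq (q p : ℕ) : dz q p = ∑' x : ℕ × ℕ, Df q p x := rfl

lemma Tf_nonneg (r q p : ℕ) (x : ℕ × ℕ) : 0 ≤ Tf r q p x := by
  unfold Tf; positivity

lemma Df_nonneg (q p : ℕ) (x : ℕ × ℕ) : 0 ≤ Df q p x := by
  unfold Df; positivity

lemma half_le {X Y : ℝ} (hX : 1 ≤ X) (hY : 1 ≤ Y) : (X * Y) ^ ((1:ℝ)/2) ≤ X + Y := by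
  have h1 : X * Y ≤ (X + Y) ^ (2:ℕ) := by nlinarith
  have h2 : ((X*Y):ℝ) ^ ((1:ℝ)/2) ≤ ((X+Y)^(2:ℕ)) ^ ((1:ℝ)/2) :=
    Real.rpow_le_rpow (by positivity) h1 (by norm_num)
  calc (X * Y) ^ ((1:ℝ)/2) ≤ ((X+Y)^(2:ℕ)) ^ ((1:ℝ)/2) := h2
    _ = (X+Y) ^ ((2:ℝ) * (1/2)) := by
        rw [← Real.rpow_natCast (X+Y) 2, ← Real.rpow_mul (by positivity)]
        norm_num
    _ = X + Y := by norm_num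

lemma rpow32 {X : ℝ} (hX : 0 < X) : X ^ ((3:ℝ)/2) = X * X ^ ((1:ℝ)/2) := by
  nth_rewrite 2 [← Real.rpow_one X]
  rw [← Real.rpow_add hX]
  norm_num

lemma bound1 {X Y : ℝ} (hX : 1 ≤ X) (hY : 1 ≤ Y) {r q p : ℕ} (hr : 1 ≤ r) (hq : 1 ≤ q)
    (hp : 1 ≤ p) : X ^ ((3:ℝ)/2) * Y ^ ((3:ℝ)/2) ≤ (X+Y) ^ r * X ^ q * Y ^ p := by
  have hX0 : (0:ℝ) < X := lt_of_lt_of_le one_pos hX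
  have hY0 : (0:ℝ) < Y := lt_of_lt_of_le one_pos hY
  have e1 : X ^ ((3:ℝ)/2) * Y ^ ((3:ℝ)/2) = (X * Y) * ((X*Y) ^ ((1:ℝ)/2)) := by
    rw [rpow32 hX0, rpow32 hY0, Real.mul_rpow hX0.le hY0.le]; ring
  rw [e1]
  have h2 : (X*Y) * ((X*Y) ^ ((1:ℝ)/2)) ≤ (X^q * Y^p) * (X+Y) := by
    apply mul_le_mul
    · exact mul_le_mul (le_self_pow₀ hX (by omega)) (le_self_pow₀ hY (by omega)) hY0.le (by positivity)
    · exact half_le hX hY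
    · positivity
    · positivity
  refine h2.trans ?_
  have h3 : X + Y ≤ (X+Y)^r := le_self_pow₀ (by linarith) (by omega)
  calc (X^q * Y^p) * (X+Y) ≤ (X^q * Y^p) * (X+Y)^r := by
        apply mul_le_mul_of_nonneg_left h3 (by positivity)
    _ = (X+Y) ^ r * X ^ q * Y ^ p := by ring

lemma bound2 {X Y : ℝ} (hX : 1 ≤ X) (hY : 1 ≤ Y) {r p : ℕ} (hr : 2 ≤ r)
    (hp : 1 ≤ p) : X ^ ((3:ℝ)/2) * Y ^ ((3:ℝ)/2) ≤ (X+Y) ^ r * Y ^ p := by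
  have hX0 : (0:ℝ) < X := lt_of_lt_of_le one_pos hX
  have hY0 : (0:ℝ) < Y := lt_of_lt_of_le one_pos hY
  have hS1 : (1:ℝ) ≤ X + Y := by linarith
  have e1 : X ^ ((3:ℝ)/2) * Y ^ ((3:ℝ)/2) = (X ^ ((3:ℝ)/2) * Y ^ ((1:ℝ)/2)) * Y := by
    rw [rpow32 hY0]; ring
  rw [e1]
  have h2 : X ^ ((3:ℝ)/2) * Y ^ ((1:ℝ)/2) ≤ (X+Y) ^ ((3:ℝ)/2) * (X+Y) ^ ((1:ℝ)/2) := by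
    apply mul_le_mul
    · exact Real.rpow_le_rpow hX0.le (by linarith) (by norm_num)
    · exact Real.rpow_le_rpow hY0.le (by linarith) (by norm_num)
    · positivity
    · positivity
  have e2 : (X+Y) ^ ((3:ℝ)/2) * (X+Y) ^ ((1:ℝ)/2) = (X+Y) ^ (2:ℕ) := by
    rw [← Real.rpow_add (by linarith), ← Real.rpow_natCast (X+Y) 2]
    norm_num
  have h3 : (X+Y) ^ (2:ℕ) ≤ (X+Y) ^ r := pow_le_pow_right₀ hS1 hr
  have h4 : Y ≤ Y ^ p := le_self_pow₀ hY (by omega)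
  calc (X ^ ((3:ℝ)/2) * Y ^ ((1:ℝ)/2)) * Y ≤ ((X+Y) ^ (2:ℕ)) * Y := by
        rw [← e2]; exact mul_le_mul_of_nonneg_right h2 hY0.le
    _ ≤ (X+Y) ^ r * Y ^ p := mul_le_mul h3 h4 hY0.le (by positivity)

lemma gg_eq (n m : ℕ) :
    g n * g m = 1 / (((n:ℝ)+1) ^ ((3:ℝ)/2) * ((m:ℝ)+1) ^ ((3:ℝ)/2)) := by
  unfold g
  rw [Real.rpow_neg (by positivity), Real.rpow_neg (by positivity)]
  rw [one_div, mul_inv]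

lemma summable_Tf1 {r q p : ℕ} (hr : 1 ≤ r) (hq : 1 ≤ q) (hp : 1 ≤ p) :
    Summable (Tf r q p) := by
  apply Summable.of_nonneg_of_le (Tf_nonneg r q p) _ summable_gg
  rintro ⟨n, m⟩
  rw [gg_eq]
  unfold Tf
  simp only
  have hX : (1:ℝ) ≤ (n:ℝ)+1 := by norm_num
  have hY : (1:ℝ) ≤ (m:ℝ)+1 := by norm_num
  have hS : ((n:ℝ) + (m:ℝ) + 2) = ((n:ℝ)+1) + ((m:ℝ)+1) := by ring
  rw [hS]
  exact one_div_le_one_div_of_le (by positivity) (bound1 hX hY hr hq hp)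

lemma summable_Df {q p : ℕ} (hq : 2 ≤ q) (hp : 1 ≤ p) : Summable (Df q p) := by
  apply Summable.of_nonneg_of_le (Df_nonneg q p) _ summable_gg
  rintro ⟨n, m⟩
  rw [gg_eq]
  unfold Df
  simp only
  have hX : (1:ℝ) ≤ (n:ℝ)+1 := by norm_num
  have hY : (1:ℝ) ≤ (m:ℝ)+1 := by norm_num
  have hS : ((n:ℝ) + (m:ℝ) + 2) = ((n:ℝ)+1) + ((m:ℝ)+1) := by ring
  rw [hS]
  exact one_div_le_one_div_of_le (by positivity) (bound2 hX hY hq hp)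

lemma summable_zf {j : ℕ} (hj : 2 ≤ j) : Summable (fun n : ℕ => 1/((n:ℝ)+1)^j) := by
  have h : Summable (fun n : ℕ => 1 / (n:ℝ) ^ j) := Real.summable_one_div_nat_pow.mpr hj
  have := (summable_nat_add_iff 1).mpr h
  refine this.congr fun n => ?_
  push_cast
  ring

lemma summable_Tf0 {q p : ℕ} (hq : 2 ≤ q) (hp : 2 ≤ p) : Summable (Tf 0 q p) := by
  have h := (summable_zf hq).mul_of_nonneg (summable_zf hp)
    (fun n => by positivity) (fun n => by positivity)
  refine h.congr fun x => ?_
  unfold Tf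
  simp [pow_zero]
  ring

end Torn

namespace Torn

noncomputable def zf (j : ℕ) (n : ℕ) : ℝ := 1 / ((n : ℝ) + 1) ^ j

lemma rz_eq (j : ℕ) : rz j = ∑' n : ℕ, zf j n := rfl

lemma summable_zf' {j : ℕ} (hj : 2 ≤ j) : Summable (zf j) := summable_zf hj

lemma T_rec (c a b : ℕ) (h1 : Summable (Tf c (a+1) (b+1))) (h2 : Summable (Tf (c+1) a (b+1))) :
    T (c+1) (a+1) b = T c (a+1) (b+1) - T (c+1) a (b+1) := by
  rw [T_eq, T_eq, T_eq, ← Summable.tsum_sub h1 h2]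
  apply tsum_congr
  rintro ⟨n, m⟩
  unfold Tf
  simp only
  have hS : ((n:ℝ) + (m:ℝ) + 2) = ((n:ℝ)+1) + ((m:ℝ)+1) := by ring
  have hX : (0:ℝ) < (n:ℝ)+1 := by positivity
  have hY : (0:ℝ) < (m:ℝ)+1 := by positivity
  have hXY : (0:ℝ) < (n:ℝ)+1 + ((m:ℝ)+1) := by positivity
  rw [hS]
  rw [pow_succ ((n:ℝ)+1+((m:ℝ)+1)) c, pow_succ ((n:ℝ)+1) a, pow_succ ((m:ℝ)+1) b]
  field_simp
  ring

lemma T_zero {a b : ℕ} (ha : 2 ≤ a) (hb : 2 ≤ b) : T 0 a b = rz a * rz b := by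
  rw [T_eq]
  have hpt : ∀ x : ℕ × ℕ, Tf 0 a b x = zf a x.1 * zf b x.2 := by
    rintro ⟨n, m⟩
    unfold Tf zf
    simp only [pow_zero, one_mul]
    rw [div_mul_div_comm, one_mul]
  rw [tsum_congr hpt]
  have hsum : Summable (fun x : ℕ × ℕ => zf a x.1 * zf b x.2) :=
    (summable_zf' ha).mul_of_nonneg (summable_zf' hb)
      (fun n => by unfold zf; positivity) (fun n => by unfold zf; positivity)
  rw [Summable.tsum_prod hsum]
  rw [rz_eq, rz_eq, ← tsum_mul_right]
  exact tsum_congr fun n => by simp only; exact tsum_mul_left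

lemma T_dz (c b : ℕ) : T c 0 b = dz c b := by
  rw [T_eq, dz_eq]
  apply tsum_congr
  rintro ⟨n, m⟩
  unfold Tf Df
  simp [pow_zero, mul_one]

end Torn

namespace Torn

lemma stuffle {a b : ℕ} (ha : 2 ≤ a) (hb : 2 ≤ b) :
    rz a * rz b = dz a b + dz b a + rz (a+b) := by
  classical
  set F : ℕ × ℕ → ℝ := fun x => zf a x.1 * zf b x.2 with hF
  have hFnn : ∀ x, 0 ≤ F x := by
    rintro ⟨n, m⟩; unfold F; unfold zf; positivity
  have hFs : Summable F :=
    (summable_zf' ha).mul_of_nonneg (summable_zf' hb)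
      (fun n => by unfold zf; positivity) (fun n => by unfold zf; positivity)
  set F1 : ℕ × ℕ → ℝ := fun x => if x.2 < x.1 then F x else 0 with hF1
  set F2 : ℕ × ℕ → ℝ := fun x => if x.1 < x.2 then F x else 0 with hF2
  set F3 : ℕ × ℕ → ℝ := fun x => if x.1 = x.2 then F x else 0 with hF3
  have hs1 : Summable F1 := by
    apply Summable.of_nonneg_of_le _ _ hFs
    · intro x; unfold F1; (try dsimp only); split <;> simp [hFnn x]
    · intro x; unfold F1; (try dsimp only); split
      · exact le_refl _
      · exact hFnn x
  have hs2 : Summable F2 := by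
    apply Summable.of_nonneg_of_le _ _ hFs
    · intro x; unfold F2; (try dsimp only); split <;> simp [hFnn x]
    · intro x; unfold F2; (try dsimp only); split
      · exact le_refl _
      · exact hFnn x
  have hs3 : Summable F3 := by
    apply Summable.of_nonneg_of_le _ _ hFs
    · intro x; unfold F3; (try dsimp only); split <;> simp [hFnn x]
    · intro x; unfold F3; (try dsimp only); split
      · exact le_refl _
      · exact hFnn x
  have hsplit : ∀ x, F x = F1 x + F2 x + F3 x := by
    rintro ⟨n, m⟩
    unfold F1 F2 F3
    dsimp only
    rcases lt_trichotomy m n with h | h | h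
    · rw [if_pos h, if_neg (by omega), if_neg (by omega)]; ring
    · rw [if_neg (by omega), if_neg (by omega), if_pos (by omega)]; ring
    · rw [if_neg (by omega), if_pos h, if_neg (by omega)]; ring
  have htot : ∑' x, F x = ∑' x, F1 x + ∑' x, F2 x + ∑' x, F3 x := by
    calc ∑' x, F x = ∑' x, (F1 x + F2 x + F3 x) := tsum_congr hsplit
      _ = ∑' x, (F1 x + F2 x) + ∑' x, F3 x := Summable.tsum_add (hs1.add hs2) hs3
      _ = ∑' x, F1 x + ∑' x, F2 x + ∑' x, F3 x := by rw [Summable.tsum_add hs1 hs2]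
  -- F1 sum is dz a b
  have h1 : ∑' x, F1 x = dz a b := by
    have hinj : Function.Injective (fun y : ℕ × ℕ => (y.1 + y.2 + 1, y.2)) := by
      rintro ⟨u, v⟩ ⟨u', v'⟩ h
      simp only [Prod.mk.injEq] at h
      obtain ⟨h1, h2⟩ := h
      exact Prod.ext (by omega) h2
    have hsupp : Function.support F1 ⊆ Set.range (fun y : ℕ × ℕ => (y.1 + y.2 + 1, y.2)) := by
      rintro ⟨n, m⟩ hx
      have : m < n := by
        by_contra h
        apply hx
        unfold F1
        dsimp only
        rw [if_neg h]
      exact ⟨(n - m - 1, m), Prod.ext (by dsimp only; omega) (by dsimp only)⟩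
    rw [← hinj.tsum_eq hsupp, dz_eq]
    apply tsum_congr
    rintro ⟨u, v⟩
    unfold F1 F
    unfold zf Df
    dsimp only
    rw [if_pos (by omega)]
    rw [div_mul_div_comm, one_mul]
    push_cast
    ring_nf
  -- F2 sum is dz b a
  have h2 : ∑' x, F2 x = dz b a := by
    have hinj : Function.Injective (fun y : ℕ × ℕ => (y.2, y.1 + y.2 + 1)) := by
      rintro ⟨u, v⟩ ⟨u', v'⟩ h
      simp only [Prod.mk.injEq] at h
      obtain ⟨h1, h2⟩ := h
      exact Prod.ext (by omega) (by omega)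
    have hsupp : Function.support F2 ⊆ Set.range (fun y : ℕ × ℕ => (y.2, y.1 + y.2 + 1)) := by
      rintro ⟨n, m⟩ hx
      have : n < m := by
        by_contra h
        apply hx
        unfold F2
        dsimp only
        rw [if_neg h]
      exact ⟨(m - n - 1, n), Prod.ext (by dsimp only) (by dsimp only; omega)⟩
    rw [← hinj.tsum_eq hsupp, dz_eq]
    apply tsum_congr
    rintro ⟨u, v⟩
    unfold F2 F
    unfold zf Df
    dsimp only
    rw [if_pos (by omega)]
    rw [div_mul_div_comm, one_mul]
    push_cast
    ring_nf
  -- F3 sum is rz (a+b)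
  have h3 : ∑' x, F3 x = rz (a+b) := by
    have hinj : Function.Injective (fun c : ℕ => ((c, c) : ℕ × ℕ)) := by
      intro u v h
      have := congrArg Prod.fst h
      simpa using this
    have hsupp : Function.support F3 ⊆ Set.range (fun c : ℕ => ((c, c) : ℕ × ℕ)) := by
      rintro ⟨n, m⟩ hx
      have : n = m := by
        by_contra h
        apply hx
        unfold F3
        dsimp only
        rw [if_neg h]
      exact ⟨n, by rw [this]⟩
    rw [← hinj.tsum_eq hsupp, rz_eq]
    apply tsum_congr
    intro c
    unfold F3 F
    unfold zf
    dsimp only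
    rw [if_pos rfl]
    rw [div_mul_div_comm, one_mul, ← pow_add]
  have : (∑' n, zf a n) * (∑' n, zf b n) = ∑' x, F x := by
    rw [Summable.tsum_prod hFs]
    rw [← tsum_mul_right]
    apply tsum_congr
    intro n
    (try dsimp only)
    exact tsum_mul_left.symm
  rw [← h1, ← h2, ← h3, ← htot, ← this]
  rfl

end Torn

namespace Torn

open Filter Finset Topology

noncomputable def hf (n : ℕ) : ℝ := 1 / ((n : ℝ) + 1)

lemma tele (d : ℕ) : ∑' n : ℕ, (hf n - hf (n + d)) = ∑ i ∈ Finset.range d, hf i := by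
  have hval : ∀ n : ℕ, hf n - hf (n + d) = (d : ℝ) / (((n:ℝ)+1) * ((n:ℝ)+(d:ℝ)+1)) := by
    intro n
    unfold hf
    push_cast
    have h1 : ((n:ℝ)+1) ≠ 0 := by positivity
    have h2 : ((n:ℝ)+(d:ℝ)+1) ≠ 0 := by positivity
    field_simp
    ring
  have hsum : Summable (fun n : ℕ => hf n - hf (n + d)) := by
    apply Summable.of_nonneg_of_le _ _ ((summable_zf (le_refl 2)).mul_left (d:ℝ))
    · intro n
      rw [hval n]
      positivity
    · intro n
      rw [hval n, mul_one_div]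
      gcongr
      nlinarith [Nat.cast_nonneg (α := ℝ) n, Nat.cast_nonneg (α := ℝ) d]
  have key : ∀ N : ℕ, ∑ n ∈ range N, (hf n - hf (n + d)) =
      ∑ i ∈ range d, hf i - ∑ i ∈ range d, hf (N + i) := by
    intro N
    have e1 : ∑ n ∈ range N, hf (n + d) = ∑ i ∈ Finset.Ico d (d + N), hf i := by
      rw [Finset.sum_Ico_eq_sum_range]
      simp only [show d + N - d = N by omega]
      exact Finset.sum_congr rfl fun i _ => by rw [add_comm]
    have e2 : ∑ i ∈ range d, hf i + ∑ i ∈ Finset.Ico d (d + N), hf i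
        = ∑ i ∈ range (d + N), hf i := by
      simp only [Finset.range_eq_Ico]
      exact Finset.sum_Ico_consecutive hf (Nat.zero_le d) (by omega)
    have e3 : ∑ i ∈ range N, hf i + ∑ i ∈ Finset.Ico N (N + d), hf i
        = ∑ i ∈ range (N + d), hf i := by
      simp only [Finset.range_eq_Ico]
      exact Finset.sum_Ico_consecutive hf (Nat.zero_le N) (by omega)
    have e4 : ∑ i ∈ Finset.Ico N (N + d), hf i = ∑ i ∈ range d, hf (N + i) := by
      rw [Finset.sum_Ico_eq_sum_range]
      simp only [show N + d - N = d by omega]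
    have e5 : ∑ i ∈ range (d + N), hf i = ∑ i ∈ range (N + d), hf i := by
      rw [add_comm]
    rw [Finset.sum_sub_distrib, e1]
    linarith [e2, e3, e4, e5]
  have hC : Tendsto (fun N : ℕ => ∑ i ∈ range d, hf (N + i)) atTop (𝓝 0) := by
    have : Tendsto (fun N : ℕ => ∑ i ∈ range d, hf (N + i)) atTop
        (𝓝 (∑ i ∈ range d, (0:ℝ))) := by
      apply tendsto_finset_sum
      intro i _
      apply squeeze_zero (fun N => by unfold hf; positivity)
        (g := fun N : ℕ => 1 / ((N:ℝ) + 1))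
      · intro N
        unfold hf
        apply one_div_le_one_div_of_le (by positivity)
        push_cast
        linarith [Nat.cast_nonneg (α := ℝ) i]
      · exact tendsto_one_div_add_atTop_nhds_zero_nat
    simpa using this
  have hlim : Tendsto (fun N : ℕ => ∑ n ∈ range N, (hf n - hf (n + d))) atTop
      (𝓝 (∑ i ∈ range d, hf i)) := by
    have : Tendsto (fun N : ℕ => ∑ i ∈ range d, hf i - ∑ i ∈ range d, hf (N + i)) atTop
        (𝓝 (∑ i ∈ range d, hf i - 0)) := (tendsto_const_nhds).sub hC
    rw [sub_zero] at this
    exact Tendsto.congr (fun N => (key N).symm) this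
  exact tendsto_nhds_unique hsum.hasSum.tendsto_sum_nat hlim

end Torn

namespace Torn

open Finset

lemma bound3 {X Y : ℝ} (hX1 : 1 ≤ X) (hY1 : 1 ≤ Y) (hYX : Y ≤ X) {q : ℕ} (hq : 3 ≤ q) :
    X ^ ((3:ℝ)/2) * Y ^ ((3:ℝ)/2) ≤ X ^ q * Y := by
  have hX0 : (0:ℝ) < X := lt_of_lt_of_le one_pos hX1
  have hY0 : (0:ℝ) < Y := lt_of_lt_of_le one_pos hY1
  have h1 : X ^ ((3:ℝ)/2) ≤ X ^ ((2:ℝ)) :=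
    Real.rpow_le_rpow_of_exponent_le hX1 (by norm_num)
  have h2 : Y ^ ((3:ℝ)/2) ≤ Y * X := by
    rw [rpow32 hY0]
    apply mul_le_mul_of_nonneg_left _ hY0.le
    calc Y ^ ((1:ℝ)/2) ≤ X ^ ((1:ℝ)/2) := Real.rpow_le_rpow hY0.le hYX (by norm_num)
      _ ≤ X ^ ((1:ℝ)) := Real.rpow_le_rpow_of_exponent_le hX1 (by norm_num)
      _ = X := Real.rpow_one X
  have h3 : X ^ ((3:ℝ)/2) * Y ^ ((3:ℝ)/2) ≤ X ^ ((2:ℝ)) * (Y * X) :=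
    mul_le_mul h1 h2 (by positivity) (by positivity)
  refine h3.trans ?_
  have e1 : X ^ ((2:ℝ)) = X ^ (2:ℕ) := by
    rw [← Real.rpow_natCast X 2]; norm_num
  rw [e1]
  have h4 : X ^ (2:ℕ) * (Y * X) = X ^ (3:ℕ) * Y := by ring
  rw [h4]
  exact mul_le_mul_of_nonneg_right (pow_le_pow_right₀ hX1 hq) hY0.le

lemma T11 {p : ℕ} (hp : 2 ≤ p) : T 1 1 p = dz (p+1) 1 + rz (p+2) := by
  classical
  have hTs : Summable (Tf 1 1 p) := summable_Tf1 le_rfl le_rfl (by omega)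
  have hWs : Summable (fun y : ℕ × ℕ => Tf 1 1 p (y.2, y.1)) := by
    have := (Equiv.prodComm ℕ ℕ).summable_iff.mpr hTs
    exact this.congr fun y => rfl
  have h0 : T 1 1 p = ∑' y : ℕ × ℕ, Tf 1 1 p (y.2, y.1) := by
    rw [T_eq, ← (Equiv.prodComm ℕ ℕ).tsum_eq (Tf 1 1 p)]
    exact tsum_congr fun y => rfl
  rw [h0, Summable.tsum_prod hWs]
  have inner : ∀ m : ℕ, ∑' n : ℕ, Tf 1 1 p (n, m)
      = (∑ i ∈ range (m+1), hf i) * zf (p+1) m := by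
    intro m
    have hpt : ∀ n : ℕ, Tf 1 1 p (n, m) = (hf n - hf (n + (m+1))) * zf (p+1) m := by
      intro n
      unfold Tf hf zf
      dsimp only
      push_cast
      have h1 : ((n:ℝ)+1) ≠ 0 := by positivity
      have h2 : ((m:ℝ)+1) ≠ 0 := by positivity
      have h3 : ((n:ℝ)+(m:ℝ)+2) ≠ 0 := by positivity
      have h4 : ((n:ℝ)+((m:ℝ)+1)+1) = ((n:ℝ)+(m:ℝ)+2) := by ring
      rw [h4]
      field_simp
      ring
    rw [tsum_congr hpt, tsum_mul_right, tele (m+1)]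
  rw [tsum_congr inner]
  set D : ℕ → ℝ := fun m => (∑ i ∈ range m, hf i) * zf (p+1) m with hD
  have hH : ∀ m : ℕ, ∑ i ∈ range m, hf i ≤ (m:ℝ) := by
    intro m
    calc ∑ i ∈ range m, hf i ≤ ∑ _i ∈ range m, (1:ℝ) := by
          apply Finset.sum_le_sum
          intro i _
          unfold hf
          rw [div_le_one (by positivity)]
          linarith [Nat.cast_nonneg (α := ℝ) i]
      _ = (m:ℝ) := by simp
  have hHnn : ∀ m : ℕ, 0 ≤ ∑ i ∈ range m, hf i :=
    fun m => Finset.sum_nonneg fun i _ => by unfold hf; positivity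
  have hDs : Summable D := by
    apply Summable.of_nonneg_of_le _ _ (summable_zf (le_refl 2))
    · intro m
      unfold D
      have := hHnn m
      have : (0:ℝ) ≤ zf (p+1) m := by unfold zf; positivity
      positivity
    · intro m
      unfold D
      unfold zf
      have hm1 : (0:ℝ) < (m:ℝ)+1 := by positivity
      have h1 : (∑ i ∈ range m, hf i) * (1/((m:ℝ)+1)^(p+1))
          ≤ (m:ℝ) * (1/((m:ℝ)+1)^(p+1)) :=
        mul_le_mul_of_nonneg_right (hH m) (by positivity)
      refine h1.trans ?_
      rw [mul_one_div, div_le_div_iff₀ (by positivity) (by positivity), one_mul]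
      have e1 : ((m:ℝ)+1)^(p+1) = ((m:ℝ)+1)^(p-1) * ((m:ℝ)+1)^2 := by
        rw [← pow_add]
        congr 1
        omega
      rw [e1]
      have h2 : (m:ℝ) ≤ ((m:ℝ)+1)^(p-1) := by
        calc (m:ℝ) ≤ (m:ℝ)+1 := by linarith
          _ ≤ ((m:ℝ)+1)^(p-1) := le_self_pow₀ (by linarith) (by omega)
      have h3 : (0:ℝ) ≤ ((m:ℝ)+1)^2 := by positivity
      nlinarith [h2, h3]
  have hsplit : ∀ m : ℕ, (∑ i ∈ range (m+1), hf i) * zf (p+1) m = D m + zf (p+2) m := by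
    intro m
    unfold D
    rw [Finset.sum_range_succ, add_mul]
    congr 1
    unfold hf zf
    rw [div_mul_div_comm, one_mul]
    congr 1
    ring
  rw [tsum_congr hsplit, Summable.tsum_add hDs (summable_zf' (by omega : 2 ≤ p+2))]
  congr 1
  -- ∑' D = dz (p+1) 1
  set G : ℕ × ℕ → ℝ := fun z => if z.2 < z.1 then zf (p+1) z.1 * hf z.2 else 0 with hG
  have hGnn : ∀ z, 0 ≤ G z := by
    rintro ⟨m, i⟩
    unfold G
    dsimp only
    split
    · unfold zf hf; positivity
    · exact le_refl 0
  have hGs : Summable G := by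
    apply Summable.of_nonneg_of_le hGnn _ summable_gg
    rintro ⟨m, i⟩
    rw [gg_eq]
    unfold G
    dsimp only
    split
    · rename_i hlt
      unfold zf hf
      rw [div_mul_div_comm, one_mul]
      apply one_div_le_one_div_of_le (by positivity)
      exact bound3 (by norm_num) (by norm_num)
        (by have := (Nat.cast_le (α := ℝ)).mpr hlt.le; linarith) (by omega)
    · positivity
  · -- ∑' D = dz (p+1) 1
    have hGrow : ∑' z, G z = ∑' m, ∑' i, G (m, i) := Summable.tsum_prod hGs
    have hGin : ∀ m : ℕ, ∑' i : ℕ, G (m, i) = D m := by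
      intro m
      have hvan : ∀ i ∉ range m, G (m, i) = 0 := by
        intro i hi
        unfold G
        dsimp only
        rw [if_neg (by simp at hi; omega)]
      rw [tsum_eq_sum hvan]
      have : ∀ i ∈ range m, G (m, i) = zf (p+1) m * hf i := by
        intro i hi
        unfold G
        dsimp only
        rw [if_pos (by simp at hi; omega)]
      rw [Finset.sum_congr rfl this, ← Finset.mul_sum]
      unfold D
      ring
    have hGdz : ∑' z, G z = dz (p+1) 1 := by
      have hinj : Function.Injective (fun y : ℕ × ℕ => (y.1 + y.2 + 1, y.2)) := by
        rintro ⟨u, v⟩ ⟨u', v'⟩ h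
        have h1 := congrArg Prod.fst h
        have h2 := congrArg Prod.snd h
        dsimp at h1 h2
        exact Prod.ext (by omega) h2
      have hsupp : Function.support G ⊆ Set.range (fun y : ℕ × ℕ => (y.1 + y.2 + 1, y.2)) := by
        rintro ⟨m, i⟩ hx
        have : i < m := by
          by_contra h
          apply hx
          unfold G
          dsimp only
          rw [if_neg h]
        exact ⟨(m - i - 1, i), Prod.ext (by dsimp only; omega) (by dsimp only)⟩
      rw [← hinj.tsum_eq hsupp, dz_eq]
      apply tsum_congr
      rintro ⟨u, v⟩
      unfold G
      unfold zf hf Df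
      dsimp only
      rw [if_pos (by omega)]
      rw [div_mul_div_comm, one_mul]
      push_cast
      ring_nf
    calc ∑' m, D m = ∑' m, ∑' i, G (m, i) := (tsum_congr hGin).symm
      _ = dz (p+1) 1 := hGrow.symm.trans hGdz

end Torn
namespace Torn

open Finset

lemma geo_pointwise {X Y : ℝ} (hX : 0 < X) (hY : 0 < Y) {t : ℕ} (ht : 1 ≤ t) :
    ∑ i ∈ range t, 1/((X+Y)^(2+i) * Y^(t-i))
      = 1/((X+Y)*X*Y^t) - 1/((X+Y)^(t+1)*X) := by
  have hS : (0:ℝ) < X + Y := by linarith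
  have hS0 : (X+Y) ≠ 0 := hS.ne'
  have hY0 : Y ≠ 0 := hY.ne'
  have hX0 : X ≠ 0 := hX.ne'
  have hSY : Y < X + Y := by linarith
  have hlt : 1/(X+Y) < 1/Y := one_div_lt_one_div_of_lt hY hSY
  have hne : 1/(X+Y) - 1/Y ≠ 0 := ne_of_lt (sub_neg.mpr hlt)
  have hgeom := geom_sum₂_mul (1/(X+Y)) (1/Y) t
  have hterm : ∀ i ∈ range t, 1/((X+Y)^(2+i) * Y^(t-i))
      = (1/((X+Y)^2*Y)) * ((1/(X+Y))^i * (1/Y)^(t-1-i)) := by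
    intro i hi
    rw [Finset.mem_range] at hi
    have e1 : (X+Y)^(2+i) = (X+Y)^2 * (X+Y)^i := pow_add (X+Y) 2 i
    have e2 : Y^(t-i) = Y * Y^(t-1-i) := by
      rw [← pow_succ']
      congr 1
      omega
    rw [e1, e2]
    rw [one_div_pow, one_div_pow]
    field_simp
  rw [Finset.sum_congr rfl hterm, ← Finset.mul_sum]
  apply mul_right_cancel₀ hne
  rw [mul_assoc, hgeom]
  have eS : (1/(X+Y))^t = 1/(X+Y)^t := by rw [one_div, one_div, inv_pow]
  have eY : (1/Y)^t = 1/Y^t := by rw [one_div, one_div, inv_pow]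
  rw [eS, eY, pow_succ]
  have hSt : (X+Y)^t ≠ 0 := pow_ne_zero _ hS0
  have hYt : Y^t ≠ 0 := pow_ne_zero _ hY0
  field_simp
  ring

lemma icc_pointwise {k : ℕ} (hk : 4 ≤ k) {X Y : ℝ} (hX : 0 < X) (hY : 0 < Y) :
    ∑ j ∈ Icc 2 (k-1), 1/((X+Y)^j * Y^(k-j))
      = 1/((X+Y)*X*Y^(k-2)) - 1/((X+Y)^(k-1)*X) := by
  have h1 : Icc 2 (k-1) = Ico 2 k := by
    rw [← Finset.Ico_add_one_right_eq_Icc]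
    congr 1
    omega
  rw [h1, Finset.sum_Ico_eq_sum_range]
  have h2 : ∀ i ∈ range (k - 2), 1/((X+Y)^(2+i) * Y^(k-(2+i)))
      = 1/((X+Y)^(2+i) * Y^((k-2)-i)) := by
    intro i hi
    have e : k - (2+i) = (k-2) - i := by omega
    rw [e]
  rw [Finset.sum_congr rfl h2, geo_pointwise hX hY (by omega)]
  have e : k - 2 + 1 = k - 1 := by omega
  rw [e]

end Torn

namespace Torn

open Finset

lemma sum_thm {k : ℕ} (hk : 4 ≤ k) : ∑ j ∈ Icc 2 (k-1), dz j (k-j) = rz k := by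
  have hsummands : ∀ j ∈ Icc 2 (k-1), Summable (Df j (k-j)) := by
    intro j hj
    rw [Finset.mem_Icc] at hj
    exact summable_Df hj.1 (by omega)
  set Wf : ℕ × ℕ → ℝ := fun x => Df (k-1) 1 (x.2, x.1) with hWf
  have hWs : Summable Wf := by
    have := (Equiv.prodComm ℕ ℕ).summable_iff.mpr
      (summable_Df (q := k-1) (p := 1) (by omega) le_rfl)
    exact this.congr fun y => rfl
  have hWsum : ∑' x, Wf x = dz (k-1) 1 := by
    rw [dz_eq, ← (Equiv.prodComm ℕ ℕ).tsum_eq (Df (k-1) 1)]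
    exact tsum_congr fun y => rfl
  have hT : Summable (Tf 1 1 (k-2)) := summable_Tf1 le_rfl le_rfl (by omega)
  have hpt : ∀ x : ℕ × ℕ, ∑ j ∈ Icc 2 (k-1), Df j (k-j) x = Tf 1 1 (k-2) x - Wf x := by
    rintro ⟨n, m⟩
    have hX : (0:ℝ) < (n:ℝ)+1 := by positivity
    have hY : (0:ℝ) < (m:ℝ)+1 := by positivity
    have key := icc_pointwise hk hX hY
    unfold Wf
    unfold Df Tf
    dsimp only
    rw [show (n:ℝ)+(m:ℝ)+2 = ((n:ℝ)+1)+((m:ℝ)+1) by ring,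
      show (m:ℝ)+(n:ℝ)+2 = ((n:ℝ)+1)+((m:ℝ)+1) by ring]
    simpa using key
  calc ∑ j ∈ Icc 2 (k-1), dz j (k-j)
      = ∑ j ∈ Icc 2 (k-1), ∑' x : ℕ × ℕ, Df j (k-j) x :=
        Finset.sum_congr rfl fun j _ => dz_eq _ _
    _ = ∑' x : ℕ × ℕ, ∑ j ∈ Icc 2 (k-1), Df j (k-j) x := (Summable.tsum_finsetSum hsummands).symm
    _ = ∑' x : ℕ × ℕ, (Tf 1 1 (k-2) x - Wf x) := tsum_congr hpt
    _ = T 1 1 (k-2) - dz (k-1) 1 := by rw [Summable.tsum_sub hT hWs, ← T_eq, hWsum]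
    _ = rz k := by
        rw [T11 (by omega : 2 ≤ k-2)]
        have e1 : k-2+1 = k-1 := by omega
        have e2 : k-2+2 = k := by omega
        rw [e1, e2]
        ring

end Torn

namespace Torn

open Finset

noncomputable def gens (k r : ℕ) : Set ℝ :=
  {x : ℝ | ∃ j, 2 ≤ j ∧ j ≤ r ∧ x = dz j (k - j)} ∪ {rz k} ∪
    {x : ℝ | ∃ j, 2 ≤ j ∧ j ≤ k - 2 ∧ x = rz j * rz (k - j)}

variable {k r : ℕ}

lemma mem_rzk : rz k ∈ Submodule.span ℚ (gens k r) := by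
  apply Submodule.subset_span
  left; right; rfl

lemma mem_prod {j : ℕ} (h2 : 2 ≤ j) (hj : j ≤ k - 2) :
    rz j * rz (k - j) ∈ Submodule.span ℚ (gens k r) := by
  apply Submodule.subset_span
  right; exact ⟨j, h2, hj, rfl⟩

lemma mem_dz {j : ℕ} (h2 : 2 ≤ j) (hj : j ≤ r) :
    dz j (k - j) ∈ Submodule.span ℚ (gens k r) := by
  apply Submodule.subset_span
  left; left; exact ⟨j, h2, hj, rfl⟩

lemma stuffle_mem (hk4 : 4 ≤ k) {j : ℕ} (h2 : 2 ≤ j) (hj : j ≤ k - 2) :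
    dz j (k - j) + dz (k - j) j ∈ Submodule.span ℚ (gens k r) := by
  have hb : 2 ≤ k - j := by omega
  have hst := stuffle h2 hb
  rw [show j + (k - j) = k from by omega] at hst
  have he : dz j (k - j) + dz (k - j) j = rz j * rz (k - j) - rz k := by linarith
  rw [he]
  exact sub_mem (mem_prod h2 hj) mem_rzk

lemma S_mem (hk4 : 4 ≤ k) :
    (∑ j ∈ Icc 2 (k-2), dz j (k-j)) ∈ Submodule.span ℚ (gens k r) := by
  have hre : ∑ j ∈ Icc 2 (k-2), dz (k-j) j = ∑ j ∈ Icc 2 (k-2), dz j (k-j) := by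
    refine Finset.sum_nbij' (i := fun a => k - a) (j := fun a => k - a) ?_ ?_ ?_ ?_ ?_ <;>
      intro a ha <;> simp only [Finset.mem_Icc] at ha ⊢ <;>
      first
        | omega
        | (congr 1; omega)
  have hpairs : ∑ j ∈ Icc 2 (k-2), (dz j (k-j) + dz (k-j) j)
      ∈ Submodule.span ℚ (gens k r) := by
    apply sum_mem
    intro j hj
    rw [Finset.mem_Icc] at hj
    exact stuffle_mem hk4 hj.1 hj.2
  have he : ∑ j ∈ Icc 2 (k-2), (dz j (k-j) + dz (k-j) j)
      = (∑ j ∈ Icc 2 (k-2), dz j (k-j)) + (∑ j ∈ Icc 2 (k-2), dz j (k-j)) := by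
    rw [Finset.sum_add_distrib, hre]
  have he2 : (∑ j ∈ Icc 2 (k-2), dz j (k-j))
      = (1/2 : ℚ) • (∑ j ∈ Icc 2 (k-2), (dz j (k-j) + dz (k-j) j)) := by
    rw [he, Rat.smul_def]
    push_cast
    ring
  rw [he2]
  exact Submodule.smul_mem _ _ hpairs

lemma zk1_mem (hk4 : 4 ≤ k) : dz (k-1) 1 ∈ Submodule.span ℚ (gens k r) := by
  have hs := sum_thm hk4
  have e : k - 1 = (k-2) + 1 := by omega
  rw [e, Finset.sum_Icc_succ_top (by omega : 2 ≤ (k-2)+1)] at hs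
  have e2 : k - ((k-2)+1) = 1 := by omega
  rw [e2, ← e] at hs
  have he : dz (k-1) 1 = rz k - ∑ j ∈ Icc 2 (k-2), dz j (k-j) := by linarith
  rw [he]
  exact sub_mem mem_rzk (S_mem hk4)

lemma summable_Tf2 {c b : ℕ} (hc : 2 ≤ c) (hb : 1 ≤ b) : Summable (Tf c 0 b) := by
  refine (summable_Df hc hb).congr fun x => ?_
  unfold Tf Df
  simp

lemma main_ind (hk4 : 4 ≤ k) (hrk : r ≤ k - 2) :
    ∀ N c a b : ℕ, c + a ≤ N → 1 ≤ c → c ≤ r → 1 ≤ a → 1 ≤ b → c + a + b = k →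
      T c a b ∈ Submodule.span ℚ (gens k r) := by
  intro N
  induction N with
  | zero => intro c a b h hc; omega
  | succ N ih =>
    intro c a b hN hc hcr ha hb hsum
    rcases Nat.lt_or_ge c 2 with hc2 | hc2
    · -- c = 1
      have hc1 : c = 1 := by omega
      subst hc1
      rcases Nat.lt_or_ge a 2 with ha2 | ha2
      · -- c = 1, a = 1 : base case
        have ha1 : a = 1 := by omega
        subst ha1
        have hbk : b = k - 2 := by omega
        subst hbk
        rw [T11 (by omega : 2 ≤ k - 2)]
        rw [show k - 2 + 1 = k - 1 from by omega, show k - 2 + 2 = k from by omega]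
        exact add_mem (zk1_mem hk4) mem_rzk
      · -- c = 1, a ≥ 2
        obtain ⟨e, rfl⟩ : ∃ e, a = e + 2 := ⟨a - 2, by omega⟩
        have h1 : Summable (Tf 0 (e+2) (b+1)) := summable_Tf0 (by omega) (by omega)
        have h2 : Summable (Tf 1 (e+1) (b+1)) := summable_Tf1 le_rfl (by omega) (by omega)
        have hrec := T_rec 0 (e+1) b h1 h2
        rw [hrec]
        apply sub_mem
        · rw [T_zero (by omega : 2 ≤ e+2) (by omega : 2 ≤ b+1)]
          rw [show b + 1 = k - (e+2) from by omega]
          exact mem_prod (by omega) (by omega)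
        · exact ih 1 (e+1) (b+1) (by omega) le_rfl hcr (by omega) (by omega) (by omega)
    · -- c ≥ 2
      obtain ⟨d, rfl⟩ : ∃ d, c = d + 2 := ⟨c - 2, by omega⟩
      rcases Nat.lt_or_ge a 2 with ha2 | ha2
      · -- a = 1, c ≥ 2
        have ha1 : a = 1 := by omega
        subst ha1
        have h1 : Summable (Tf (d+1) 1 (b+1)) := summable_Tf1 (by omega) le_rfl (by omega)
        have h2 : Summable (Tf (d+2) 0 (b+1)) := summable_Tf2 (by omega) (by omega)
        have hrec := T_rec (d+1) 0 b h1 h2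
        rw [hrec]
        apply sub_mem
        · exact ih (d+1) 1 (b+1) (by omega) (by omega) (by omega) le_rfl (by omega) (by omega)
        · rw [T_dz (d+2) (b+1)]
          rw [show b + 1 = k - (d+2) from by omega]
          exact mem_dz (by omega) (by omega)
      · -- a ≥ 2, c ≥ 2
        obtain ⟨e, rfl⟩ : ∃ e, a = e + 2 := ⟨a - 2, by omega⟩
        have h1 : Summable (Tf (d+1) (e+2) (b+1)) := summable_Tf1 (by omega) (by omega) (by omega)
        have h2 : Summable (Tf (d+2) (e+1) (b+1)) := summable_Tf1 (by omega) (by omega) (by omega)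
        have hrec := T_rec (d+1) (e+1) b h1 h2
        rw [hrec]
        apply sub_mem
        · exact ih (d+1) (e+2) (b+1) (by omega) (by omega) (by omega) (by omega) (by omega)
            (by omega)
        · exact ih (d+2) (e+1) (b+1) (by omega) (by omega) (by omega) (by omega) (by omega)
            (by omega)

end Torn


theorem tornheim_in_span (k r q p : ℕ) (hk : Even k) (hk4 : 4 ≤ k)
    (hr : 1 ≤ r) (hq : 1 ≤ q) (hp : 1 ≤ p) (hsum : r + q + p = k) :
    T r q p ∈ Submodule.span ℚ
      ({x : ℝ | ∃ j, 2 ≤ j ∧ j ≤ r ∧ x = dz j (k - j)} ∪ {rz k} ∪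
       {x : ℝ | ∃ j, 2 ≤ j ∧ j ≤ k - 2 ∧ x = rz j * rz (k - j)}) := by
  have := Torn.main_ind (k := k) (r := r) hk4 (by omega) (r + q) r q p le_rfl hr le_rfl hq hp hsum
  exact this
end

section
/- Let k be even, and let r ≥ 2 and p, q ≥ 1 be integers with r + q + p = k. Then T(r,q,p) - (-1)^p·ζ(r, k-r) lies in the Q-span of the double zeta values ζ(j, k-j) for 2 ≤ j ≤ r-1 together with ζ(k) and the products ζ(j)·ζ(k-j) for 2 ≤ j ≤ k-2. -/
namespace TornheimAux

open Finset Filter Function Set Topology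

noncomputable def u (n : ℕ) : ℝ := (n : ℝ) + 1

lemma u_pos (n : ℕ) : 0 < u n := by unfold u; positivity

lemma one_le_u (n : ℕ) : 1 ≤ u n := by
  unfold u; have : (0:ℝ) ≤ (n:ℝ) := Nat.cast_nonneg n; linarith

lemma u_add (i j : ℕ) : u (i + j + 1) = u i + u j := by unfold u; push_cast; ring

noncomputable def F (a b c : ℕ) (x : ℕ × ℕ) : ℝ :=
  1 / ((u x.1 + u x.2) ^ a * u x.1 ^ b * u x.2 ^ c)

lemma F_nonneg (a b c : ℕ) (x : ℕ × ℕ) : 0 ≤ F a b c x := by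
  have h1 := u_pos x.1; have h2 := u_pos x.2
  unfold F; positivity

lemma summable_u_pow {j : ℕ} (hj : 2 ≤ j) : Summable fun n : ℕ => 1 / u n ^ j := by
  have h0 : Summable fun n : ℕ => 1 / (n : ℝ) ^ 2 := Real.summable_one_div_nat_pow.mpr one_lt_two
  have h2 : Summable fun n : ℕ => 1 / u n ^ 2 := by
    have h := h0.comp_injective (add_left_injective 1)
    refine h.congr fun n => ?_
    simp only [Function.comp_apply]
    unfold u; push_cast; ring
  refine Summable.of_nonneg_of_le
    (fun n => (one_div_nonneg.mpr (pow_nonneg (u_pos n).le j))) (fun n => ?_) h2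
  exact one_div_le_one_div_of_le (pow_pos (u_pos n) 2) (pow_le_pow_right₀ (one_le_u n) hj)

lemma summable_sq : Summable fun x : ℕ × ℕ => (1 / u x.1 ^ 2) * (1 / u x.2 ^ 2) := by
  have h := Summable.mul_of_nonneg (f := fun n : ℕ => 1 / u n ^ 2)
    (g := fun n : ℕ => 1 / u n ^ 2) (summable_u_pow le_rfl) (summable_u_pow le_rfl)
    (fun n => one_div_nonneg.mpr (pow_nonneg (u_pos n).le 2))
    (fun n => one_div_nonneg.mpr (pow_nonneg (u_pos n).le 2))
  exact h

lemma summable_F {a b c : ℕ} (hab : 2 ≤ a + b) (hac : 2 ≤ a + c) (habc : 4 ≤ a + b + c) :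
    Summable (F a b c) := by
  refine Summable.of_nonneg_of_le (F_nonneg a b c) (fun x => ?_) summable_sq
  set n := u x.1 with hn
  set m := u x.2 with hm
  have hn1 : 1 ≤ n := one_le_u x.1
  have hm1 : 1 ≤ m := one_le_u x.2
  have hn0 : 0 < n := u_pos x.1
  have hm0 : 0 < m := u_pos x.2
  have hs1 : 1 ≤ n + m := by linarith
  have key : n ^ 2 * m ^ 2 ≤ (n + m) ^ a * n ^ b * m ^ c := by
    have h1 : n ^ 2 ≤ (n + m) ^ (2 - min b 2) * n ^ b := by
      have : n ^ 2 = n ^ (2 - min b 2) * n ^ (min b 2) := by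
        rw [← pow_add]; congr 1; omega
      rw [this]
      exact mul_le_mul (pow_le_pow_left₀ hn0.le (by linarith) _)
        (pow_le_pow_right₀ hn1 (min_le_left b 2)) (by positivity) (by positivity)
    have h2 : m ^ 2 ≤ (n + m) ^ (2 - min c 2) * m ^ c := by
      have : m ^ 2 = m ^ (2 - min c 2) * m ^ (min c 2) := by
        rw [← pow_add]; congr 1; omega
      rw [this]
      exact mul_le_mul (pow_le_pow_left₀ hm0.le (by linarith) _)
        (pow_le_pow_right₀ hm1 (min_le_left c 2)) (by positivity) (by positivity)
    calc n ^ 2 * m ^ 2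
        ≤ ((n + m) ^ (2 - min b 2) * n ^ b) * ((n + m) ^ (2 - min c 2) * m ^ c) :=
          mul_le_mul h1 h2 (by positivity) (by positivity)
      _ = (n + m) ^ ((2 - min b 2) + (2 - min c 2)) * n ^ b * m ^ c := by
          rw [pow_add]; ring
      _ ≤ (n + m) ^ a * n ^ b * m ^ c := by
          refine mul_le_mul_of_nonneg_right (mul_le_mul_of_nonneg_right
            (pow_le_pow_right₀ hs1 (by omega)) (by positivity)) (by positivity)
  calc F a b c x = 1 / ((n + m) ^ a * n ^ b * m ^ c) := rfl
    _ ≤ 1 / (n ^ 2 * m ^ 2) := one_div_le_one_div_of_le (by positivity) key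
    _ = (1 / n ^ 2) * (1 / m ^ 2) := by rw [one_div_mul_one_div]


noncomputable def S (a b c : ℕ) : ℝ := ∑' x : ℕ × ℕ, F a b c x

lemma T_eq (r q p : ℕ) : T r q p = S r q p := by
  unfold T S
  refine tsum_congr fun x => ?_
  have h : ((x.1 : ℝ) + (x.2 : ℝ) + 2) = u x.1 + u x.2 := by unfold u; ring
  unfold F
  rw [h]; rfl

lemma dz_eq (q p : ℕ) : dz q p = S q 0 p := by
  unfold dz S
  refine tsum_congr fun x => ?_
  have h : ((x.1 : ℝ) + (x.2 : ℝ) + 2) = u x.1 + u x.2 := by unfold u; ring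
  unfold F
  rw [h, pow_zero, mul_one]; rfl

lemma rz_eq (j : ℕ) : rz j = ∑' n : ℕ, 1 / u n ^ j := rfl

lemma F_pf (a b c : ℕ) (x : ℕ × ℕ) :
    F (a + 1) b (c + 1) x = F a (b + 1) (c + 1) x - F (a + 1) (b + 1) c x := by
  have hn := u_pos x.1; have hm := u_pos x.2
  have hs : (0:ℝ) < u x.1 + u x.2 := by linarith
  unfold F
  rw [div_sub_div _ _ (by positivity) (by positivity), div_eq_div_iff (by positivity) (by positivity)]
  ring

lemma S_rec {a b c : ℕ} (h2 : Summable (F a (b + 1) (c + 1))) (h3 : Summable (F (a + 1) (b + 1) c)) :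
    S (a + 1) b (c + 1) = S a (b + 1) (c + 1) - S (a + 1) (b + 1) c := by
  unfold S
  rw [← Summable.tsum_sub h2 h3]
  exact tsum_congr (F_pf a b c)

lemma S_swap (a b c : ℕ) : S a b c = S a c b := by
  unfold S
  rw [← (Equiv.prodComm ℕ ℕ).tsum_eq (F a b c)]
  refine tsum_congr fun x => ?_
  unfold F
  simp only [Equiv.prodComm_apply, Prod.fst_swap, Prod.snd_swap]
  rw [add_comm (u x.2) (u x.1)]
  ring_nf

lemma tsum_g_mul {b c : ℕ} (hb : 2 ≤ b) (hc : 2 ≤ c) :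
    ∑' x : ℕ × ℕ, (1 / u x.1 ^ b) * (1 / u x.2 ^ c) = rz b * rz c := by
  have hs : Summable fun x : ℕ × ℕ => (1 / u x.1 ^ b) * (1 / u x.2 ^ c) := by
    have h := Summable.mul_of_nonneg (f := fun n : ℕ => 1 / u n ^ b)
      (g := fun n : ℕ => 1 / u n ^ c) (summable_u_pow hb) (summable_u_pow hc)
      (fun n => one_div_nonneg.mpr (pow_nonneg (u_pos n).le b))
      (fun n => one_div_nonneg.mpr (pow_nonneg (u_pos n).le c))
    exact h
  rw [Summable.tsum_prod hs, rz_eq, rz_eq]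
  calc ∑' (a : ℕ) (b' : ℕ), (1 / u a ^ b) * (1 / u b' ^ c)
      = ∑' (a : ℕ), (1 / u a ^ b) * ∑' (b' : ℕ), (1 / u b' ^ c) := by
        refine tsum_congr fun a => ?_
        exact tsum_mul_left
    _ = (∑' (a : ℕ), 1 / u a ^ b) * ∑' (b' : ℕ), (1 / u b' ^ c) := tsum_mul_right

lemma S_prod {b c : ℕ} (hb : 2 ≤ b) (hc : 2 ≤ c) : S 0 b c = rz b * rz c := by
  rw [← tsum_g_mul hb hc]
  unfold S F
  refine tsum_congr fun x => ?_
  rw [pow_zero, one_mul, one_div_mul_one_div]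

def inj1 : ℕ × ℕ → ℕ × ℕ := fun y => (y.1 + y.2 + 1, y.2)
def inj2 : ℕ × ℕ → ℕ × ℕ := fun y => (y.2, y.1 + y.2 + 1)
def injd : ℕ → ℕ × ℕ := fun n => (n, n)

lemma inj1_inj : Function.Injective inj1 := by
  rintro ⟨a, b⟩ ⟨c, d⟩ h
  simp only [inj1, Prod.mk.injEq] at h
  have : a = c := by omega
  simp [this, h.2]

lemma inj2_inj : Function.Injective inj2 := by
  rintro ⟨a, b⟩ ⟨c, d⟩ h
  simp only [inj2, Prod.mk.injEq] at h
  have : a = c := by omega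
  simp [this, h.1]

lemma injd_inj : Function.Injective injd := by
  intro a b h
  simpa [injd, Prod.mk.injEq] using h

lemma mem_range_inj1 {x : ℕ × ℕ} (h : x.2 < x.1) : x ∈ Set.range inj1 :=
  ⟨(x.1 - x.2 - 1, x.2), by simp only [inj1]; ext <;> simp <;> omega⟩

lemma mem_range_inj2 {x : ℕ × ℕ} (h : x.1 < x.2) : x ∈ Set.range inj2 :=
  ⟨(x.2 - x.1 - 1, x.1), by simp only [inj2]; ext <;> simp <;> omega⟩

lemma mem_range_injd {x : ℕ × ℕ} (h : x.1 = x.2) : x ∈ Set.range injd :=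
  ⟨x.1, by simp only [injd]; ext <;> simp [h]⟩

lemma tsum_split (f : ℕ × ℕ → ℝ) (hf : Summable f) :
    ∑' x, f x = (∑' y : ℕ × ℕ, f (inj1 y)) + (∑' y : ℕ × ℕ, f (inj2 y)) + ∑' n : ℕ, f (n, n) := by
  classical
  set S1 : Set (ℕ × ℕ) := {x | x.2 < x.1} with hS1
  set S2 : Set (ℕ × ℕ) := {x | x.1 < x.2} with hS2
  set S3 : Set (ℕ × ℕ) := {x | x.1 = x.2} with hS3
  have h1 : Summable (S1.indicator f) := hf.indicator S1
  have h2 : Summable (S2.indicator f) := hf.indicator S2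
  have h3 : Summable (S3.indicator f) := hf.indicator S3
  have hsplit : ∀ x, f x = S1.indicator f x + S2.indicator f x + S3.indicator f x := by
    intro x
    rcases lt_trichotomy x.2 x.1 with h | h | h
    · rw [Set.indicator_of_mem (by exact h) f,
        Set.indicator_of_notMem (by simp [hS2]; omega) f,
        Set.indicator_of_notMem (by simp [hS3]; omega) f]
      ring
    · rw [Set.indicator_of_notMem (by simp [hS1]; omega) f,
        Set.indicator_of_notMem (by simp [hS2]; omega) f,
        Set.indicator_of_mem (by simp [hS3]; omega) f]
      ring
    · rw [Set.indicator_of_notMem (by simp [hS1]; omega) f,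
        Set.indicator_of_mem (by exact h) f,
        Set.indicator_of_notMem (by simp [hS3]; omega) f]
      ring
  rw [tsum_congr hsplit, Summable.tsum_add (h1.add h2) h3, Summable.tsum_add h1 h2]
  congr 1
  · congr 1
    · rw [← inj1_inj.tsum_eq (f := S1.indicator f)]
      · refine tsum_congr fun y => ?_
        rw [Set.indicator_of_mem (by simp [hS1, inj1]) f]
      · intro x hx
        have hxS : x ∈ S1 := by
          by_contra hc
          exact hx (Set.indicator_of_notMem hc f)
        exact mem_range_inj1 hxS
    · rw [← inj2_inj.tsum_eq (f := S2.indicator f)]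
      · refine tsum_congr fun y => ?_
        rw [Set.indicator_of_mem (by simp [hS2, inj2]) f]
      · intro x hx
        have hxS : x ∈ S2 := by
          by_contra hc
          exact hx (Set.indicator_of_notMem hc f)
        exact mem_range_inj2 hxS
  · rw [← injd_inj.tsum_eq (f := S3.indicator f)]
    · refine tsum_congr fun n => ?_
      rw [Set.indicator_of_mem (by simp [hS3, injd]) f]
      rfl
    · intro x hx
      have hxS : x ∈ S3 := by
        by_contra hc
        exact hx (Set.indicator_of_notMem hc f)
      exact mem_range_injd hxS

lemma stuffle {a b : ℕ} (ha : 2 ≤ a) (hb : 2 ≤ b) :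
    rz a * rz b = dz a b + dz b a + rz (a + b) := by
  set g : ℕ × ℕ → ℝ := fun x => (1 / u x.1 ^ a) * (1 / u x.2 ^ b) with hg
  have hs : Summable g := by
    have h := Summable.mul_of_nonneg (f := fun n : ℕ => 1 / u n ^ a)
      (g := fun n : ℕ => 1 / u n ^ b) (summable_u_pow ha) (summable_u_pow hb)
      (fun n => one_div_nonneg.mpr (pow_nonneg (u_pos n).le a))
      (fun n => one_div_nonneg.mpr (pow_nonneg (u_pos n).le b))
    exact h
  have hsplit := tsum_split g hs
  have hL : ∑' x, g x = rz a * rz b := tsum_g_mul ha hb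
  have hp1 : (∑' y : ℕ × ℕ, g (inj1 y)) = dz a b := by
    rw [dz_eq]
    unfold S
    refine tsum_congr fun y => ?_
    simp only [hg, inj1, F]
    rw [u_add, pow_zero, mul_one, one_div_mul_one_div]
  have hp2 : (∑' y : ℕ × ℕ, g (inj2 y)) = dz b a := by
    rw [dz_eq]
    unfold S
    refine tsum_congr fun y => ?_
    simp only [hg, inj2, F]
    rw [u_add, pow_zero, mul_one, one_div_mul_one_div, mul_comm]
  have hpd : (∑' n : ℕ, g (n, n)) = rz (a + b) := by
    rw [rz_eq]
    refine tsum_congr fun n => ?_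
    simp only [hg]
    rw [one_div_mul_one_div, ← pow_add]
  rw [hL, hp1, hp2, hpd] at hsplit
  exact hsplit

lemma tendsto_one_div_u : Tendsto (fun n : ℕ => 1 / u n) atTop (𝓝 0) := by
  have h : Tendsto (fun n : ℕ => u n) atTop atTop := by
    unfold u
    exact tendsto_atTop_add_const_right _ 1 tendsto_natCast_atTop_atTop
  simpa [one_div, Pi.inv_def] using h.inv_tendsto_atTop

lemma hasSum_tele (i : ℕ) :
    HasSum (fun b : ℕ => 1 / u (b + i) - 1 / u (b + i + 1)) (1 / u i) := by
  have hnn : ∀ b : ℕ, 0 ≤ 1 / u (b + i) - 1 / u (b + i + 1) := by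
    intro b
    have hle : u (b + i) ≤ u (b + i + 1) := by unfold u; push_cast; linarith
    have := one_div_le_one_div_of_le (u_pos (b + i)) hle
    linarith
  rw [hasSum_iff_tendsto_nat_of_nonneg hnn]
  have hps : ∀ M : ℕ, ∑ b ∈ Finset.range M, (1 / u (b + i) - 1 / u (b + i + 1))
      = 1 / u i - 1 / u (M + i) := by
    intro M
    induction M with
    | zero => simp
    | succ M ih =>
      rw [Finset.sum_range_succ, ih]
      have h' : M + 1 + i = M + i + 1 := by omega
      rw [h']
      ring
  simp only [hps]
  have h2 : Tendsto (fun M : ℕ => 1 / u (M + i)) atTop (𝓝 0) :=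
    tendsto_one_div_u.comp (tendsto_add_atTop_nat i)
  simpa using tendsto_const_nhds.sub h2

lemma tsum_tele (t : ℕ) :
    ∑' b : ℕ, (1 / u b - 1 / u (b + t)) = ∑ i ∈ Finset.range t, 1 / u i := by
  have hterm : ∀ b : ℕ, 1 / u b - 1 / u (b + t)
      = ∑ i ∈ Finset.range t, (1 / u (b + i) - 1 / u (b + i + 1)) := by
    intro b
    induction t with
    | zero => simp
    | succ t ih =>
      rw [Finset.sum_range_succ, ← ih]
      ring
  rw [tsum_congr hterm,
    Summable.tsum_finsetSum (fun i _ => (hasSum_tele i).summable)]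
  exact Finset.sum_congr rfl fun i _ => (hasSum_tele i).tsum_eq

lemma inner_eval (qq a : ℕ) :
    ∑' b : ℕ, F 1 qq 1 (a, b) = (1 / u a ^ (qq + 1)) * ∑ j ∈ Finset.range (a + 1), 1 / u j := by
  have h1 : ∀ b : ℕ, F 1 qq 1 (a, b) = (1 / u a ^ (qq + 1)) * (1 / u b - 1 / u (b + (a + 1))) := by
    intro b
    have hba : u (b + (a + 1)) = u a + u b := by unfold u; push_cast; ring
    have hn := u_pos a; have hm := u_pos b
    have hs : (0:ℝ) < u a + u b := by linarith
    unfold F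
    rw [hba]
    rw [div_sub_div _ _ (ne_of_gt hm) (ne_of_gt hs)]
    rw [div_mul_div_comm, one_mul]
    rw [div_eq_div_iff (by positivity) (by positivity)]
    ring
  rw [tsum_congr h1, tsum_mul_left, tsum_tele (a + 1)]

lemma e1 {q : ℕ} (hq : 2 ≤ q) : S 1 q 1 = dz (q + 1) 1 + rz (q + 2) := by
  classical
  have hsF : Summable (F 1 q 1) := summable_F (by omega) (by omega) (by omega)
  -- the harmonic-tail function
  set P : ℕ → ℝ := fun a => (1 / u a ^ (q + 1)) * ∑ j ∈ Finset.range a, 1 / u j with hP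
  set Wf : ℕ × ℕ → ℝ :=
    fun y => if y.2 < y.1 then (1 / u y.1 ^ (q + 1)) * (1 / u y.2) else 0 with hWf
  have hWcomp : ∀ y : ℕ × ℕ, Wf (inj1 y) = F (q + 1) 0 1 y := by
    intro y
    have hlt : y.2 < y.1 + y.2 + 1 := by omega
    simp only [hWf, inj1, if_pos hlt]
    rw [u_add]
    unfold F
    rw [pow_zero, mul_one, one_div_mul_one_div, pow_one]
  have hWsupp : ∀ x : ℕ × ℕ, x ∉ Set.range inj1 → Wf x = 0 := by
    intro x hx
    rcases Nat.lt_or_ge x.2 x.1 with h | h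
    · exact absurd (mem_range_inj1 h) hx
    · simp only [hWf]
      exact if_neg (not_lt.mpr h)
  have hWsum : Summable Wf := by
    rw [← inj1_inj.summable_iff hWsupp]
    exact (summable_F (a := q + 1) (b := 0) (c := 1) (by omega) (by omega) (by omega)).congr
      (fun y => (hWcomp y).symm)
  have hPeq : ∀ a : ℕ, ∑' b : ℕ, Wf (a, b) = P a := by
    intro a
    rw [tsum_eq_sum (s := Finset.range a) (fun b hb => by
      simp only [hWf]
      exact if_neg (not_lt.mpr (by simpa using hb)))]
    show ∑ b ∈ Finset.range a, Wf (a, b) = 1 / u a ^ (q + 1) * ∑ j ∈ Finset.range a, 1 / u j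
    rw [Finset.mul_sum]
    refine Finset.sum_congr rfl fun b hb => ?_
    simp only [hWf]
    rw [if_pos (Finset.mem_range.mp hb)]
  have hPsum : Summable P := (hWsum.prod).congr hPeq
  have hWsupp' : Function.support Wf ⊆ Set.range inj1 := by
    intro x hx
    by_contra hc
    exact hx (hWsupp x hc)
  have hdzP : dz (q + 1) 1 = ∑' a : ℕ, P a := by
    rw [dz_eq]
    unfold S
    rw [← tsum_congr hWcomp, inj1_inj.tsum_eq hWsupp', Summable.tsum_prod hWsum]
    exact tsum_congr hPeq
  have hrzsum : Summable fun a : ℕ => 1 / u a ^ (q + 2) := summable_u_pow (by omega)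
  calc S 1 q 1 = ∑' (a : ℕ) (b : ℕ), F 1 q 1 (a, b) := Summable.tsum_prod hsF
    _ = ∑' a : ℕ, (P a + 1 / u a ^ (q + 2)) := by
        refine tsum_congr fun a => ?_
        rw [inner_eval q a, Finset.sum_range_succ, mul_add, hP]
        congr 1
        rw [one_div_mul_one_div, ← pow_succ]
    _ = (∑' a : ℕ, P a) + ∑' a : ℕ, 1 / u a ^ (q + 2) := Summable.tsum_add hPsum hrzsum
    _ = dz (q + 1) 1 + rz (q + 2) := by rw [hdzP, rz_eq]

lemma step_rec {i s : ℕ} (hi : 1 ≤ i) (hw : 2 ≤ i + s) :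
    S i (s + 1) 1 = S (i + 1) s 1 + dz (i + 1) (s + 1) := by
  have h := S_rec (a := i) (b := s) (c := 0)
    (summable_F (by omega) (by omega) (by omega))
    (summable_F (by omega) (by omega) (by omega))
  have h' : S (i + 1) s 1 = S i (s + 1) 1 - S (i + 1) (s + 1) 0 := h
  rw [S_swap (i + 1) (s + 1) 0] at h'
  rw [dz_eq]
  linarith [h']

lemma chain (s : ℕ) : ∀ i k : ℕ, 1 ≤ i → 4 ≤ k → i + s + 1 = k →
    S i s 1 = S (i + s) 0 1 + ∑ j ∈ Finset.Icc (i + 1) (i + s), dz j (k - j) := by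
  induction s with
  | zero =>
    intro i k hi hk4 hk
    simp
  | succ s ih =>
    intro i k hi hk4 hk
    have hstep := step_rec (s := s) hi (by omega)
    have hih := ih (i + 1) k (by omega) hk4 (by omega)
    rw [hstep, hih]
    have hins : Finset.Icc (i + 1) (i + s + 1) =
        insert (i + 1) (Finset.Icc (i + 2) (i + s + 1)) := by
      ext j
      simp only [Finset.mem_Icc, Finset.mem_insert]
      omega
    have e1' : i + (s + 1) = i + s + 1 := by omega
    have e2' : i + 1 + s = i + s + 1 := by omega
    have e3' : i + 1 + 1 = i + 2 := by omega
    rw [e1', e2', e3']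
    have e4' : s + 1 = k - (i + 1) := by omega
    rw [e4', hins, Finset.sum_insert (by simp only [Finset.mem_Icc]; omega)]
    ring

lemma sum_thm {k : ℕ} (hk : 4 ≤ k) :
    ∑ j ∈ Finset.Icc 2 (k - 1), dz j (k - j) = rz k := by
  have hc := chain (k - 2) 1 k le_rfl hk (by omega)
  have he := e1 (q := k - 2) (by omega)
  have h1 : k - 2 + 1 = k - 1 := by omega
  have h2 : k - 2 + 2 = k := by omega
  have h3 : 1 + (k - 2) = k - 1 := by omega
  rw [h1, h2] at he
  rw [h3] at hc
  have h4 : S (k - 1) 0 1 = dz (k - 1) 1 := (dz_eq _ _).symm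
  have h5 : (1 : ℕ) + 1 = 2 := rfl
  rw [h4, h5] at hc
  rw [he] at hc
  linarith [hc]

def Gen (k r : ℕ) : Set ℝ :=
  {x : ℝ | ∃ j, 2 ≤ j ∧ j ≤ r - 1 ∧ x = dz j (k - j)} ∪ {rz k} ∪
    {x : ℝ | ∃ j, 2 ≤ j ∧ j ≤ k - 2 ∧ x = rz j * rz (k - j)}

variable {k r : ℕ}

lemma mem_rzk : rz k ∈ Submodule.span ℚ (Gen k r) :=
  Submodule.subset_span (Or.inl (Or.inr rfl))

lemma mem_dzj {j : ℕ} (h2 : 2 ≤ j) (hj : j ≤ r - 1) :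
    dz j (k - j) ∈ Submodule.span ℚ (Gen k r) :=
  Submodule.subset_span (Or.inl (Or.inl ⟨j, h2, hj, rfl⟩))

lemma mem_prodj {j : ℕ} (h2 : 2 ≤ j) (hj : j ≤ k - 2) :
    rz j * rz (k - j) ∈ Submodule.span ℚ (Gen k r) :=
  Submodule.subset_span (Or.inr ⟨j, h2, hj, rfl⟩)

lemma mem_sum_dz (hk : 4 ≤ k) :
    (∑ j ∈ Finset.Icc 2 (k - 2), dz j (k - j)) ∈ Submodule.span ℚ (Gen k r) := by
  have hPr : (∑ j ∈ Finset.Icc 2 (k - 2), rz j * rz (k - j))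
      = 2 * (∑ j ∈ Finset.Icc 2 (k - 2), dz j (k - j)) + ((k : ℝ) - 3) * rz k := by
    have hterm : ∀ j ∈ Finset.Icc 2 (k - 2),
        rz j * rz (k - j) = dz j (k - j) + dz (k - j) j + rz k := by
      intro j hj
      simp only [Finset.mem_Icc] at hj
      have h := stuffle (a := j) (b := k - j) hj.1 (by omega)
      rw [show j + (k - j) = k from by omega] at h
      exact h
    rw [Finset.sum_congr rfl hterm, Finset.sum_add_distrib, Finset.sum_add_distrib]
    have hswap : ∑ j ∈ Finset.Icc 2 (k - 2), dz (k - j) j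
        = ∑ j ∈ Finset.Icc 2 (k - 2), dz j (k - j) := by
      refine Finset.sum_nbij' (i := fun j => k - j) (j := fun j => k - j)
        ?_ ?_ ?_ ?_ ?_
      · intro a ha; simp only [Finset.mem_Icc] at ha ⊢; omega
      · intro a ha; simp only [Finset.mem_Icc] at ha ⊢; omega
      · intro a ha; simp only [Finset.mem_Icc] at ha; show k - (k - a) = a; omega
      · intro a ha; simp only [Finset.mem_Icc] at ha; show k - (k - a) = a; omega
      · intro a ha
        simp only [Finset.mem_Icc] at ha
        rw [show k - (k - a) = a from by omega]
    rw [hswap, Finset.sum_const, Nat.card_Icc]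
    have hcard : k - 2 + 1 - 2 = k - 3 := by omega
    rw [hcard]
    have : ((k - 3 : ℕ) : ℝ) = (k : ℝ) - 3 := by
      push_cast [Nat.cast_sub (by omega : 3 ≤ k)]
      ring
    rw [nsmul_eq_mul, this]
    ring
  have key : (∑ j ∈ Finset.Icc 2 (k - 2), dz j (k - j))
      = ((1 : ℚ) / 2) • ((∑ j ∈ Finset.Icc 2 (k - 2), rz j * rz (k - j))
          - ((k : ℚ) - 3) • rz k) := by
    rw [Rat.smul_def, Rat.smul_def]
    push_cast
    linarith [hPr]
  rw [key]
  refine Submodule.smul_mem _ _ (sub_mem ?_ (Submodule.smul_mem _ _ mem_rzk))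
  refine Submodule.sum_mem _ fun j hj => ?_
  simp only [Finset.mem_Icc] at hj
  exact mem_prodj hj.1 hj.2

lemma mem_dzk1 (hk : 4 ≤ k) : dz (k - 1) 1 ∈ Submodule.span ℚ (Gen k r) := by
  have hst := sum_thm hk
  have hins : Finset.Icc 2 (k - 1) = insert (k - 1) (Finset.Icc 2 (k - 2)) := by
    ext j
    simp only [Finset.mem_Icc, Finset.mem_insert]
    omega
  rw [hins, Finset.sum_insert (by simp only [Finset.mem_Icc]; omega)] at hst
  rw [show k - (k - 1) = 1 from by omega] at hst
  have hdd : dz (k - 1) 1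
      = rz k - ∑ j ∈ Finset.Icc 2 (k - 2), dz j (k - j) := by linarith [hst]
  rw [hdd]
  exact sub_mem mem_rzk (mem_sum_dz hk)

lemma mem_S1 (hk : 4 ≤ k) : S 1 (k - 2) 1 ∈ Submodule.span ℚ (Gen k r) := by
  have he := e1 (q := k - 2) (by omega)
  rw [show k - 2 + 1 = k - 1 from by omega, show k - 2 + 2 = k from by omega] at he
  rw [he]
  exact add_mem (mem_dzk1 hk) mem_rzk

lemma mem_C (hk : 4 ≤ k) : ∀ p q : ℕ, 1 ≤ p → 2 ≤ q → 1 + q + p = k →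
    S 1 q p ∈ Submodule.span ℚ (Gen k r) := by
  intro p
  induction p with
  | zero => intro q h1 _ _; exact absurd h1 (by omega)
  | succ p ih =>
    intro q hp hq hks
    rcases Nat.eq_zero_or_pos p with hp0 | hp1
    · subst hp0
      have hq' : q = k - 2 := by omega
      subst hq'
      exact mem_S1 hk
    · have hrec : S 1 q (p + 1) = S 0 (q + 1) (p + 1) - S 1 (q + 1) p :=
        S_rec (a := 0) (b := q) (c := p)
          (summable_F (by omega) (by omega) (by omega))
          (summable_F (by omega) (by omega) (by omega))
      rw [hrec]
      refine sub_mem ?_ (ih (q + 1) hp1 (by omega) (by omega))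
      rw [S_prod (by omega) (by omega)]
      rw [show p + 1 = k - (q + 1) from by omega]
      exact mem_prodj (by omega) (by omega)

lemma mem_B (hk : 4 ≤ k) (hr : 2 ≤ r) : ∀ j s : ℕ, 1 ≤ j → j ≤ r - 1 → j + s + 1 = k →
    S j s 1 ∈ Submodule.span ℚ (Gen k r) := by
  intro j
  induction j with
  | zero => intro s h1 _ _; exact absurd h1 (by omega)
  | succ j ih =>
    intro s h1 hjr hks
    rcases Nat.eq_zero_or_pos j with h0 | h1'
    · subst h0
      have hs' : s = k - 2 := by omega
      subst hs'
      exact mem_S1 hk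
    · have hrec : S (j + 1) s 1 = S j (s + 1) 1 - S (j + 1) (s + 1) 0 :=
        S_rec (a := j) (b := s) (c := 0)
          (summable_F (by omega) (by omega) (by omega))
          (summable_F (by omega) (by omega) (by omega))
      rw [S_swap (j + 1) (s + 1) 0, ← dz_eq] at hrec
      rw [hrec]
      refine sub_mem (ih (s + 1) h1' (by omega) (by omega)) ?_
      rw [show s + 1 = k - (j + 1) from by omega]
      exact mem_dzj (by omega) (by omega)

lemma mem_M (hk : 4 ≤ k) (hr : 2 ≤ r) : ∀ n, ∀ r' q p : ℕ, r' + p ≤ n → 2 ≤ r' → r' ≤ r →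
    1 ≤ q → 1 ≤ p → r' + q + p = k →
    S r' q p - (-1 : ℝ) ^ p * dz r' (k - r') ∈ Submodule.span ℚ (Gen k r) := by
  intro n
  induction n with
  | zero => intro r' q p hle h2 _ _ _ _; exact absurd hle (by omega)
  | succ n ih =>
    intro r' q p hle h2 hrr hq hp hks
    obtain ⟨t, rfl⟩ : ∃ t, r' = t + 1 := ⟨r' - 1, by omega⟩
    have ht1 : 1 ≤ t := by omega
    rcases Nat.eq_zero_or_pos (p - 1) with hp1 | hp2
    · -- p = 1
      have hp' : p = 1 := by omega
      subst hp'
      have hrec : S (t + 1) q 1 = S t (q + 1) 1 - S (t + 1) (q + 1) 0 :=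
        S_rec (a := t) (b := q) (c := 0)
          (summable_F (by omega) (by omega) (by omega))
          (summable_F (by omega) (by omega) (by omega))
      rw [S_swap (t + 1) (q + 1) 0, ← dz_eq] at hrec
      have hdzeq : dz (t + 1) (q + 1) = dz (t + 1) (k - (t + 1)) := by
        rw [show q + 1 = k - (t + 1) from by omega]
      have hgoal : S (t + 1) q 1 - (-1 : ℝ) ^ 1 * dz (t + 1) (k - (t + 1))
          = S t (q + 1) 1 := by
        rw [hrec, hdzeq]; ring
      rw [hgoal]
      exact mem_B hk hr t (q + 1) ht1 (by omega) (by omega)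
    · -- p ≥ 2
      obtain ⟨p', rfl⟩ : ∃ p', p = p' + 1 := ⟨p - 1, by omega⟩
      have hp'1 : 1 ≤ p' := by omega
      have hrec : S (t + 1) q (p' + 1) = S t (q + 1) (p' + 1) - S (t + 1) (q + 1) p' :=
        S_rec (a := t) (b := q) (c := p')
          (summable_F (by omega) (by omega) (by omega))
          (summable_F (by omega) (by omega) (by omega))
      have hBmem : S (t + 1) (q + 1) p' - (-1 : ℝ) ^ p' * dz (t + 1) (k - (t + 1))
          ∈ Submodule.span ℚ (Gen k r) :=
        ih (t + 1) (q + 1) p' (by omega) (by omega) hrr (by omega) hp'1 (by omega)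
      have hAmem : S t (q + 1) (p' + 1) ∈ Submodule.span ℚ (Gen k r) := by
        rcases Nat.lt_or_ge t 2 with ht2 | ht2
        · have ht' : t = 1 := by omega
          subst ht'
          exact mem_C hk (p' + 1) (q + 1) (by omega) (by omega) (by omega)
        · have hdzt : dz t (k - t) ∈ Submodule.span ℚ (Gen k r) :=
            mem_dzj ht2 (by omega)
          have hMt := ih t (q + 1) (p' + 1) (by omega) ht2 (by omega) (by omega)
            (by omega) (by omega)
          have hsgn : (-1 : ℝ) ^ (p' + 1) * dz t (k - t)
              ∈ Submodule.span ℚ (Gen k r) := by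
            rcases Nat.even_or_odd (p' + 1) with he | ho
            · rw [he.neg_one_pow, one_mul]; exact hdzt
            · rw [ho.neg_one_pow, neg_one_mul]; exact neg_mem hdzt
          have hdec : S t (q + 1) (p' + 1)
              = (S t (q + 1) (p' + 1) - (-1 : ℝ) ^ (p' + 1) * dz t (k - t))
                + (-1 : ℝ) ^ (p' + 1) * dz t (k - t) := by ring
          rw [hdec]
          exact add_mem hMt hsgn
      have hkey : S (t + 1) q (p' + 1) - (-1 : ℝ) ^ (p' + 1) * dz (t + 1) (k - (t + 1))
          = S t (q + 1) (p' + 1)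
            - (S (t + 1) (q + 1) p' - (-1 : ℝ) ^ p' * dz (t + 1) (k - (t + 1))) := by
        rw [hrec, pow_succ]
        ring
      rw [hkey]
      exact sub_mem hAmem hBmem

end TornheimAux

theorem tornheim_reduction (k r q p : ℕ) (hk : Even k) (hr : 2 ≤ r)
    (hq : 1 ≤ q) (hp : 1 ≤ p) (hsum : r + q + p = k) :
    T r q p - (-1 : ℝ) ^ p * dz r (k - r) ∈ Submodule.span ℚ
      ({x : ℝ | ∃ j, 2 ≤ j ∧ j ≤ r - 1 ∧ x = dz j (k - j)} ∪ {rz k} ∪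
       {x : ℝ | ∃ j, 2 ≤ j ∧ j ≤ k - 2 ∧ x = rz j * rz (k - j)}) := by
  have hk4 : 4 ≤ k := by omega
  have h := TornheimAux.mem_M (k := k) (r := r) hk4 hr (r + p) r q p le_rfl hr le_rfl hq hp hsum
  rw [TornheimAux.T_eq]
  exact h
end

section
/- For integers p ≥ 2, r ≥ 1, q ≥ 0 with q + r ≥ 2, the Tornheim series satisfies: T(r,q,p) - (-1)^p · Σ_{j=1}^{r-1} C(p+r-j-2, p-1) · ζ(j+1, k-j-1) lies in the Q-span of ζ(k) and the products ζ(j)·ζ(k-j) for 2 ≤ j ≤ k-2, where k = p + q + r. -/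
open Finset

namespace TornProof

/-- The general summand. -/
noncomputable def G (a b c : ℕ) (x : ℕ × ℕ) : ℝ :=
  1 / (((x.1 : ℝ) + (x.2 : ℝ) + 2) ^ a * ((x.1 : ℝ) + 1) ^ b * ((x.2 : ℝ) + 1) ^ c)

lemma T_eq (r q p : ℕ) : T r q p = ∑' x : ℕ × ℕ, G r q p x := rfl

lemma dz_eq (a b : ℕ) : dz a b = ∑' x : ℕ × ℕ, G a 0 b x := by
  unfold dz G; exact tsum_congr fun x => by rw [pow_zero, mul_one]

lemma G_nonneg (a b c : ℕ) (x : ℕ × ℕ) : 0 ≤ G a b c x := by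
  unfold G; positivity

lemma G_pos (a b c : ℕ) (x : ℕ × ℕ) : 0 < G a b c x := by
  have h1 : (0:ℝ) < (x.1 : ℝ) + (x.2 : ℝ) + 2 := by positivity
  have h2 : (0:ℝ) < (x.1 : ℝ) + 1 := by positivity
  have h3 : (0:ℝ) < (x.2 : ℝ) + 1 := by positivity
  unfold G; positivity

lemma summable_rz {j : ℕ} (hj : 2 ≤ j) : Summable (fun n : ℕ => 1 / ((n : ℝ) + 1) ^ j) := by
  have h : Summable (fun n : ℕ => 1 / (n : ℝ) ^ j) :=
    Real.summable_one_div_nat_pow.2 (by omega)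
  have := (summable_nat_add_iff 1).2 h
  refine this.congr fun n => by push_cast; ring

lemma summable_prod_pow {s t : ℕ} (hs : 2 ≤ s) (ht : 2 ≤ t) :
    Summable (fun x : ℕ × ℕ => (1 / ((x.1 : ℝ) + 1) ^ s) * (1 / ((x.2 : ℝ) + 1) ^ t)) :=
  (summable_rz hs).mul_of_nonneg (summable_rz ht)
    (fun n => by positivity) (fun n => by positivity)

lemma summable_G {a b c : ℕ} (hab : 2 ≤ a + b) (hac : 2 ≤ a + c) (habc : 4 ≤ a + b + c) :
    Summable (G a b c) := by
  obtain ⟨a1, a2, ha, hs, ht⟩ : ∃ a1 a2 : ℕ, a1 + a2 = a ∧ 2 ≤ a1 + b ∧ 2 ≤ a2 + c := by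
    rcases le_or_gt 2 c with h | h
    · exact ⟨a, 0, by omega, by omega, by omega⟩
    · exact ⟨a - (2 - c), 2 - c, by omega, by omega, by omega⟩
  refine Summable.of_nonneg_of_le (G_nonneg a b c) (fun x => ?_) (summable_prod_pow hs ht)
  set N : ℝ := (x.1 : ℝ) + (x.2 : ℝ) + 2 with hN
  have h1 : (0:ℝ) < (x.1 : ℝ) + 1 := by positivity
  have h3 : (0:ℝ) < (x.2 : ℝ) + 1 := by positivity
  have hN1 : ((x.1 : ℝ) + 1) ≤ N := by
    have : (0:ℝ) ≤ (x.2 : ℝ) := by positivity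
    simp only [hN]; linarith
  have hN2 : ((x.2 : ℝ) + 1) ≤ N := by
    have : (0:ℝ) ≤ (x.1 : ℝ) := by positivity
    simp only [hN]; linarith
  rw [one_div_mul_one_div]
  unfold G
  rw [← hN]
  apply one_div_le_one_div_of_le (by positivity)
  calc ((x.1 : ℝ) + 1) ^ (a1 + b) * ((x.2 : ℝ) + 1) ^ (a2 + c)
      = (((x.1:ℝ)+1) ^ a1 * ((x.2:ℝ)+1) ^ a2) * (((x.1:ℝ)+1) ^ b * ((x.2:ℝ)+1) ^ c) := by
        rw [pow_add, pow_add]; ring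
    _ ≤ (N ^ a1 * N ^ a2) * (((x.1:ℝ)+1) ^ b * ((x.2:ℝ)+1) ^ c) := by
        apply mul_le_mul_of_nonneg_right
        · exact mul_le_mul (pow_le_pow_left₀ h1.le hN1 a1) (pow_le_pow_left₀ h3.le hN2 a2)
            (by positivity) (by positivity)
        · positivity
    _ = N ^ a * (((x.1:ℝ)+1) ^ b * ((x.2:ℝ)+1) ^ c) := by rw [← pow_add, ha]
    _ = N ^ a * ((x.1:ℝ)+1) ^ b * ((x.2:ℝ)+1) ^ c := by ring

lemma G_swap (a b c : ℕ) (x : ℕ × ℕ) : G a b c x.swap = G a c b x := by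
  unfold G
  simp only [Prod.fst_swap, Prod.snd_swap]
  ring_nf

lemma tsum_G_swap (a b c : ℕ) : ∑' x : ℕ × ℕ, G a b c x = ∑' x : ℕ × ℕ, G a c b x := by
  rw [← (Equiv.prodComm ℕ ℕ).tsum_eq (G a b c)]
  exact tsum_congr fun x => G_swap a b c x

lemma dz_eq' (a b : ℕ) : dz a b = ∑' x : ℕ × ℕ, G a b 0 x := by
  rw [dz_eq, tsum_G_swap]

lemma T_swap (r q p : ℕ) : T r q p = T r p q := by
  rw [T_eq, T_eq, tsum_G_swap]

lemma prod_eval {b c : ℕ} (hb : 2 ≤ b) (hc : 2 ≤ c) :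
    ∑' x : ℕ × ℕ, G 0 b c x = rz b * rz c := by
  have h0 : ∀ x : ℕ × ℕ, G 0 b c x = (1 / ((x.1 : ℝ) + 1) ^ b) * (1 / ((x.2 : ℝ) + 1) ^ c) := by
    intro x; unfold G; rw [pow_zero, one_mul, one_div_mul_one_div]
  rw [tsum_congr h0]
  have hsum := summable_prod_pow hb hc
  rw [Summable.tsum_prod' hsum hsum.prod_factor]
  unfold rz
  rw [← tsum_mul_right]
  exact tsum_congr fun n => by simp only []; exact tsum_mul_left

lemma G_rec (a b c : ℕ) (x : ℕ × ℕ) :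
    G a (b + 1) (c + 1) x = G (a + 1) b (c + 1) x + G (a + 1) (b + 1) c x := by
  unfold G
  have h1 : (0:ℝ) < (x.1 : ℝ) + 1 := by positivity
  have h3 : (0:ℝ) < (x.2 : ℝ) + 1 := by positivity
  have h2 : (0:ℝ) < (x.1 : ℝ) + (x.2 : ℝ) + 2 := by positivity
  rw [div_add_div _ _ (by positivity) (by positivity), div_eq_div_iff (by positivity) (by positivity)]
  ring

lemma tsum_G_rec {a b c : ℕ} (h1 : Summable (G (a + 1) b (c + 1)))
    (h2 : Summable (G (a + 1) (b + 1) c)) :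
    ∑' x : ℕ × ℕ, G a (b + 1) (c + 1) x =
      ∑' x : ℕ × ℕ, G (a + 1) b (c + 1) x + ∑' x : ℕ × ℕ, G (a + 1) (b + 1) c x := by
  rw [← Summable.tsum_add h1 h2]
  exact tsum_congr fun x => G_rec a b c x


noncomputable def H (n : ℕ) : ℝ := ∑ j ∈ range n, 1 / ((j : ℝ) + 1)

lemma H_nonneg (n : ℕ) : 0 ≤ H n := by
  unfold H; apply Finset.sum_nonneg; intro j _; positivity

lemma H_le (n : ℕ) : H n ≤ (n : ℝ) := by
  unfold H
  calc ∑ j ∈ range n, 1 / ((j : ℝ) + 1) ≤ ∑ j ∈ range n, 1 := by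
        apply Finset.sum_le_sum; intro j _
        rw [div_le_one (by positivity)]
        have : (0:ℝ) ≤ (j:ℝ) := by positivity
        linarith
    _ = (n : ℝ) := by simp

lemma H_succ (n : ℕ) : H (n + 1) = H n + 1 / ((n : ℝ) + 1) := by
  unfold H; rw [sum_range_succ]

lemma telescope (a : ℝ) (ha : 0 < a) :
    HasSum (fun i : ℕ => 1 / ((i : ℝ) + a) - 1 / ((i : ℝ) + 1 + a)) (1 / a) := by
  have hnn : ∀ i : ℕ, 0 ≤ 1 / ((i : ℝ) + a) - 1 / ((i : ℝ) + 1 + a) := by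
    intro i
    have h1 : (0:ℝ) < (i : ℝ) + a := by positivity
    have h2 : (0:ℝ) < (i : ℝ) + 1 + a := by linarith
    have := one_div_le_one_div_of_le h1 (by linarith : (i:ℝ) + a ≤ (i:ℝ) + 1 + a)
    linarith
  rw [hasSum_iff_tendsto_nat_of_nonneg hnn]
  have hps : ∀ n : ℕ, ∑ i ∈ range n, (1 / ((i : ℝ) + a) - 1 / ((i : ℝ) + 1 + a))
      = 1 / a - 1 / ((n : ℝ) + a) := by
    intro n
    have heq : ∑ i ∈ range n, (1 / ((i:ℝ) + a) - 1 / ((i:ℝ) + 1 + a))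
        = ∑ i ∈ range n, (1 / ((i:ℝ) + a) - 1 / (((i+1:ℕ):ℝ) + a)) := by
      apply Finset.sum_congr rfl
      intro i _
      push_cast
      ring_nf
    rw [heq, Finset.sum_range_sub' (fun i : ℕ => 1 / ((i : ℝ) + a)) n]
    norm_num
  simp only [hps]
  have h1 : Filter.Tendsto (fun n : ℕ => (n : ℝ) + a) Filter.atTop Filter.atTop :=
    Filter.tendsto_atTop_add_const_right _ a tendsto_natCast_atTop_atTop
  have h2 : Filter.Tendsto (fun n : ℕ => 1 / ((n : ℝ) + a)) Filter.atTop (nhds 0) := by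
    simpa [one_div, Pi.inv_def] using h1.inv_tendsto_atTop
  have := (tendsto_const_nhds (x := 1/a) (f := Filter.atTop (α := ℕ))).sub h2
  simpa using this

lemma hasSum_H (m : ℕ) :
    HasSum (fun i : ℕ => 1 / ((i : ℝ) + 1) - 1 / ((i : ℝ) + 1 + ((m : ℝ) + 1))) (H (m + 1)) := by
  induction m with
  | zero =>
      have h := telescope 1 one_pos
      have : H 1 = 1 := by unfold H; simp
      rw [this]
      refine HasSum.congr_fun (by simpa using h) fun i => ?_
      norm_num
  | succ m ih =>
      have h2 := telescope ((m : ℝ) + 2) (by positivity)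
      have h3 := ih.add h2
      have hv : H (m + 1) + 1 / ((m : ℝ) + 2) = H (m + 2) := by
        rw [H_succ (m+1)]; push_cast; ring
      rw [hv] at h3
      refine HasSum.congr_fun h3 fun i => ?_
      push_cast
      have d1 : (0:ℝ) < (i : ℝ) + 1 + ((m : ℝ) + 1) := by positivity
      have d2 : (0:ℝ) < (i : ℝ) + ((m : ℝ) + 2) := by positivity
      have : (i : ℝ) + 1 + ((m : ℝ) + 1) = (i : ℝ) + ((m : ℝ) + 2) := by ring
      rw [this]
      ring

section T11sec
open Finset Function

lemma summable_G31body {s : ℕ} (hs : 2 ≤ s) :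
    Summable (fun x : ℕ × ℕ =>
      if x.2 < x.1 then (1 / ((x.1 : ℝ) + 1) ^ (s + 1)) * (1 / ((x.2 : ℝ) + 1)) else 0) := by
  refine Summable.of_nonneg_of_le (fun x => ?_) (fun x => ?_) (summable_prod_pow (s:=s) (t:=2) hs (by norm_num))
  · split <;> positivity
  · split
    · rename_i hlt
      have h1 : (0:ℝ) < (x.1 : ℝ) + 1 := by positivity
      have h2 : (0:ℝ) < (x.2 : ℝ) + 1 := by positivity
      have hle : ((x.2 : ℝ) + 1) ≤ ((x.1 : ℝ) + 1) := by
        have : (x.2 : ℝ) ≤ (x.1 : ℝ) := by exact_mod_cast Nat.le_of_lt hlt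
        linarith
      rw [one_div_mul_one_div, one_div_mul_one_div]
      apply one_div_le_one_div_of_le (by positivity)
      calc ((x.1:ℝ)+1) ^ s * ((x.2:ℝ)+1) ^ 2
          = (((x.1:ℝ)+1) ^ s * ((x.2:ℝ)+1)) * ((x.2:ℝ)+1) := by ring
        _ ≤ (((x.1:ℝ)+1) ^ s * ((x.2:ℝ)+1)) * ((x.1:ℝ)+1) := by
            apply mul_le_mul_of_nonneg_left hle (by positivity)
        _ = ((x.1:ℝ)+1) ^ (s+1) * ((x.2:ℝ)+1) := by rw [pow_succ]; ring
    · positivity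

lemma dz_as_H {s : ℕ} (hs : 2 ≤ s) :
    dz (s + 1) 1 = ∑' b : ℕ, (1 / ((b : ℝ) + 1) ^ (s + 1)) * H b := by
  set F : ℕ × ℕ → ℝ := fun x =>
    if x.2 < x.1 then (1 / ((x.1 : ℝ) + 1) ^ (s + 1)) * (1 / ((x.2 : ℝ) + 1)) else 0 with hF
  have hFsum : Summable F := summable_G31body hs
  have h1 : ∑' x : ℕ × ℕ, F x = dz (s + 1) 1 := by
    rw [dz_eq]
    have hinj : Injective (fun c : ℕ × ℕ => (c.1 + c.2 + 1, c.2)) := by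
      intro a b h
      simp only [Prod.mk.injEq] at h
      exact Prod.ext_iff.2 ⟨by omega, by omega⟩
    have hsupp : Function.support F ⊆ Set.range (fun c : ℕ × ℕ => (c.1 + c.2 + 1, c.2)) := by
      intro x hx
      rw [Function.mem_support, hF] at hx
      by_cases hlt : x.2 < x.1
      · exact ⟨(x.1 - x.2 - 1, x.2), by rw [Prod.ext_iff]; constructor <;> simp <;> omega⟩
      · simp [hlt] at hx
    rw [← Injective.tsum_eq hinj hsupp]
    apply tsum_congr
    intro c
    have hlt : c.2 < c.1 + c.2 + 1 := by omega
    simp only [hF, hlt, if_pos]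
    unfold G
    push_cast
    rw [pow_zero]
    rw [one_div_mul_one_div]
    ring_nf
  rw [← h1, Summable.tsum_prod' hFsum hFsum.prod_factor]
  apply tsum_congr
  intro b
  have hzero : ∀ c : ℕ, c ∉ range b → F (b, c) = 0 := by
    intro c hc
    simp only [hF]
    rw [if_neg]
    simpa using fun h => hc (mem_range.2 h)
  rw [tsum_eq_sum hzero]
  have : ∀ c ∈ range b, F (b, c) = (1 / ((b : ℝ) + 1) ^ (s + 1)) * (1 / ((c : ℝ) + 1)) := by
    intro c hc
    simp only [hF]
    rw [if_pos (mem_range.1 hc)]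
  rw [Finset.sum_congr rfl this, ← Finset.mul_sum]
  rfl

lemma summable_H_mul {s : ℕ} (hs : 2 ≤ s) :
    Summable (fun b : ℕ => (1 / ((b : ℝ) + 1) ^ (s + 1)) * H b) := by
  refine Summable.of_nonneg_of_le (fun b => ?_) (fun b => ?_) (summable_rz hs)
  · have := H_nonneg b; positivity
  · have h1 : (0:ℝ) < ((b:ℝ) + 1) ^ (s + 1) := by positivity
    have h2 : H b ≤ (b:ℝ) + 1 := le_trans (H_le b) (by linarith)
    calc (1 / ((b : ℝ) + 1) ^ (s + 1)) * H b ≤ (1 / ((b : ℝ) + 1) ^ (s + 1)) * ((b:ℝ)+1) := by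
          apply mul_le_mul_of_nonneg_left h2 (by positivity)
      _ = 1 / ((b:ℝ)+1) ^ s := by
          rw [pow_succ]
          field_simp
  done

lemma T11 {s : ℕ} (hs : 2 ≤ s) : T 1 1 s = rz (s + 2) + dz (s + 1) 1 := by
  have hG : Summable (G 1 s 1) := summable_G (by omega) (by omega) (by omega)
  have step1 : T 1 1 s = ∑' b : ℕ, ∑' c : ℕ, G 1 s 1 (b, c) := by
    rw [T_eq, tsum_G_swap]
    exact Summable.tsum_prod' hG hG.prod_factor
  have inner : ∀ b : ℕ, ∑' c : ℕ, G 1 s 1 (b, c) = (1 / ((b : ℝ) + 1) ^ (s + 1)) * H (b + 1) := by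
    intro b
    have hpt : ∀ c : ℕ, G 1 s 1 (b, c)
        = (1 / ((b : ℝ) + 1) ^ (s + 1)) * (1 / ((c : ℝ) + 1) - 1 / ((c : ℝ) + 1 + ((b : ℝ) + 1))) := by
      intro c
      unfold G
      simp only
      have h1 : (0:ℝ) < (b:ℝ) + 1 := by positivity
      have h2 : (0:ℝ) < (c:ℝ) + 1 := by positivity
      have h3 : (0:ℝ) < (b:ℝ) + (c:ℝ) + 2 := by positivity
      have h4 : (0:ℝ) < (c:ℝ) + 1 + ((b:ℝ) + 1) := by positivity
      have h5 : ((b:ℝ) + 1) ^ (s+1) ≠ 0 := by positivity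
      field_simp
      ring
    rw [tsum_congr hpt, tsum_mul_left, (hasSum_H b).tsum_eq]
  have step2 : T 1 1 s = ∑' b : ℕ, (1 / ((b : ℝ) + 1) ^ (s + 1)) * H (b + 1) := by
    rw [step1]; exact tsum_congr inner
  have hsplit : ∀ b : ℕ, (1 / ((b : ℝ) + 1) ^ (s + 1)) * H (b + 1)
      = 1 / ((b : ℝ) + 1) ^ (s + 2) + (1 / ((b : ℝ) + 1) ^ (s + 1)) * H b := by
    intro b
    rw [H_succ]
    have h1 : (0:ℝ) < (b:ℝ) + 1 := by positivity
    have h5 : ((b:ℝ) + 1) ^ (s+1) ≠ 0 := by positivity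
    have h6 : ((b:ℝ) + 1) ^ (s+2) = ((b:ℝ) + 1) ^ (s+1) * ((b:ℝ)+1) := pow_succ _ _
    field_simp [h6]
    ring
  rw [step2, tsum_congr hsplit,
    Summable.tsum_add (summable_rz (by omega)) (summable_H_mul hs), dz_as_H hs]
  rfl
end T11sec

section Reflsec
open Finset Function

lemma tsum_tri_aux {a b : ℕ} (f : ℕ × ℕ → ℝ) (ι : ℕ × ℕ → ℕ × ℕ)
    (hinj : Injective ι) (hsupp : Function.support f ⊆ Set.range ι) :
    ∑' c : ℕ × ℕ, f (ι c) = ∑' x : ℕ × ℕ, f x := Injective.tsum_eq hinj hsupp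

lemma reflect {a b : ℕ} (ha : 2 ≤ a) (hb : 2 ≤ b) :
    rz a * rz b = dz a b + dz b a + rz (a + b) := by
  have hG : Summable (G 0 a b) := summable_G (by omega) (by omega) (by omega)
  set g1 : ℕ × ℕ → ℝ := fun x => if x.2 < x.1 then G 0 a b x else 0 with hg1
  set g2 : ℕ × ℕ → ℝ := fun x => if x.1 < x.2 then G 0 a b x else 0 with hg2
  set g3 : ℕ × ℕ → ℝ := fun x => if x.1 = x.2 then G 0 a b x else 0 with hg3
  have hdec : ∀ x, G 0 a b x = g1 x + g2 x + g3 x := by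
    intro x
    simp only [hg1, hg2, hg3]
    rcases lt_trichotomy x.1 x.2 with h | h | h
    · rw [if_neg (by omega), if_pos h, if_neg (by omega)]; ring
    · rw [if_neg (by omega), if_neg (by omega), if_pos h]; ring
    · rw [if_pos h, if_neg (by omega), if_neg (by omega)]; ring
  have key : ∀ g : ℕ × ℕ → ℝ, (∀ x, g x = if _ : True then g x else 0) → True := fun _ _ => trivial
  have hs1 : Summable g1 := by
    refine Summable.of_nonneg_of_le (fun x => ?_) (fun x => ?_) hG <;> simp only [hg1]
    · split
      · exact G_nonneg 0 a b x
      · rfl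
    · split
      · exact le_refl _
      · exact G_nonneg 0 a b x
  have hs2 : Summable g2 := by
    refine Summable.of_nonneg_of_le (fun x => ?_) (fun x => ?_) hG <;> simp only [hg2]
    · split
      · exact G_nonneg 0 a b x
      · rfl
    · split
      · exact le_refl _
      · exact G_nonneg 0 a b x
  have hs3 : Summable g3 := by
    refine Summable.of_nonneg_of_le (fun x => ?_) (fun x => ?_) hG <;> simp only [hg3]
    · split
      · exact G_nonneg 0 a b x
      · rfl
    · split
      · exact le_refl _
      · exact G_nonneg 0 a b x
  have e1 : ∑' x : ℕ × ℕ, g1 x = dz a b := by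
    rw [dz_eq]
    have hinj : Injective (fun c : ℕ × ℕ => (c.1 + c.2 + 1, c.2)) := by
      intro u v h
      simp only [Prod.mk.injEq] at h
      exact Prod.ext_iff.2 ⟨by omega, by omega⟩
    have hsupp : Function.support g1 ⊆ Set.range (fun c : ℕ × ℕ => (c.1 + c.2 + 1, c.2)) := by
      intro x hx
      rw [Function.mem_support, hg1] at hx
      by_cases hlt : x.2 < x.1
      · exact ⟨(x.1 - x.2 - 1, x.2), by rw [Prod.ext_iff]; constructor <;> (simp; try omega)⟩
      · simp [hlt] at hx
    rw [← Injective.tsum_eq hinj hsupp]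
    apply tsum_congr
    intro c
    have hlt : c.2 < c.1 + c.2 + 1 := by omega
    simp only [hg1, hlt, if_pos]
    unfold G
    push_cast
    rw [pow_zero, pow_zero]
    ring_nf
  have e2 : ∑' x : ℕ × ℕ, g2 x = dz b a := by
    rw [dz_eq]
    have hinj : Injective (fun c : ℕ × ℕ => (c.2, c.1 + c.2 + 1)) := by
      intro u v h
      simp only [Prod.mk.injEq] at h
      exact Prod.ext_iff.2 ⟨by omega, by omega⟩
    have hsupp : Function.support g2 ⊆ Set.range (fun c : ℕ × ℕ => (c.2, c.1 + c.2 + 1)) := by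
      intro x hx
      rw [Function.mem_support, hg2] at hx
      by_cases hlt : x.1 < x.2
      · exact ⟨(x.2 - x.1 - 1, x.1), by rw [Prod.ext_iff]; constructor <;> (simp; try omega)⟩
      · simp [hlt] at hx
    rw [← Injective.tsum_eq hinj hsupp]
    apply tsum_congr
    intro c
    have hlt : c.2 < c.1 + c.2 + 1 := by omega
    simp only [hg2, hlt, if_pos]
    unfold G
    push_cast
    rw [pow_zero, pow_zero]
    ring_nf
  have e3 : ∑' x : ℕ × ℕ, g3 x = rz (a + b) := by
    unfold rz
    have hinj : Injective (fun c : ℕ => ((c, c) : ℕ × ℕ)) := by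
      intro u v h
      simp only [Prod.mk.injEq] at h
      omega
    have hsupp : Function.support g3 ⊆ Set.range (fun c : ℕ => ((c, c) : ℕ × ℕ)) := by
      intro x hx
      rw [Function.mem_support, hg3] at hx
      by_cases heq : x.1 = x.2
      · exact ⟨x.1, by rw [Prod.ext_iff]; constructor <;> simp [heq]⟩
      · simp [heq] at hx
    rw [← Injective.tsum_eq hinj hsupp]
    apply tsum_congr
    intro c
    simp only [hg3, if_pos rfl]
    unfold G
    rw [pow_zero, one_mul, pow_add]
  calc rz a * rz b = ∑' x : ℕ × ℕ, G 0 a b x := (prod_eval ha hb).symm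
    _ = ∑' x : ℕ × ℕ, (g1 x + g2 x + g3 x) := tsum_congr hdec
    _ = ∑' x : ℕ × ℕ, (g1 x + g2 x) + ∑' x : ℕ × ℕ, g3 x := Summable.tsum_add (hs1.add hs2) hs3
    _ = (∑' x : ℕ × ℕ, g1 x + ∑' x : ℕ × ℕ, g2 x) + ∑' x : ℕ × ℕ, g3 x := by
        rw [Summable.tsum_add hs1 hs2]
    _ = dz a b + dz b a + rz (a + b) := by rw [e1, e2, e3]
end Reflsec

section MainSec
open Finset

lemma MAIN : ∀ n p r q k : ℕ, p + r = n → 1 ≤ p → 1 ≤ r → 2 ≤ q + r → 4 ≤ k → p + q + r = k →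
    T r q p = (∑ i ∈ Icc 2 p, (-1:ℝ)^(p-i) * ((r+p-i-1).choose (r-1) : ℝ) * (rz (k-i) * rz i))
      + ((-1:ℝ)^p * ∑ i ∈ Icc 2 r, ((r+p-i-1).choose (p-1) : ℝ) * dz i (k-i))
      + (-1:ℝ)^(p+1) * ((r+p-2).choose (p-1) : ℝ) * T 1 (k-2) 1 := by
  intro n
  induction n using Nat.strong_induction_on with
  | _ n ih =>
    intro p r q k hn hp hr hqr hk4 hk
    obtain ⟨p', rfl⟩ : ∃ p', p = p' + 1 := ⟨p - 1, by omega⟩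
    obtain ⟨r', rfl⟩ : ∃ r', r = r' + 1 := ⟨r - 1, by omega⟩
    match p', r' with
    | 0, 0 =>
      -- T 1 q 1 = T 1 (k-2) 1 with k-2 = q
      have hq : k - 2 = q := by omega
      simp only [Icc_eq_empty_of_lt (by norm_num : (1:ℕ) < 2), sum_empty, hq]
      norm_num
    | 0, r'' + 1 =>
      have hIH := ih (1 + (r'' + 1)) (by omega) 1 (r'' + 1) (q + 1) k rfl (by omega)
        (by omega) (by omega) (by omega) (by omega)
      have hs1 : Summable (G (r''+2) q 1) := summable_G (by omega) (by omega) (by omega)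
      have hs2 : Summable (G (r''+2) (q+1) 0) := summable_G (by omega) (by omega) (by omega)
      have hrec : T (r''+1) (q+1) 1 = T (r''+2) q 1 + dz (r''+2) (q+1) := by
        rw [T_eq, T_eq, dz_eq']
        exact tsum_G_rec (a := r''+1) (b := q) (c := 0) hs1 hs2
      have h21 : Finset.Icc 2 (0+1) = (∅ : Finset ℕ) := Finset.Icc_eq_empty (by omega)
      have h21' : Finset.Icc 2 1 = (∅ : Finset ℕ) := Finset.Icc_eq_empty (by omega)
      rw [h21, Finset.sum_empty]
      rw [h21', Finset.sum_empty] at hIH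
      norm_num at hIH ⊢
      rw [Finset.sum_Icc_succ_top (show (2:ℕ) ≤ r''+1+1 by omega)]
      have hq1 : k - (r''+1+1) = q+1 := by omega
      rw [hq1]
      have hgoal : T (r''+1+1) q 1 = T (r''+2) q 1 := rfl
      rw [hgoal]
      linarith [hrec, hIH]
    | p'' + 1, 0 =>
      -- p = p''+2, r = 1, q ≥ 1
      have hq1 : 1 ≤ q := by omega
      have hIH := ih (p'' + 1 + 1) (by omega) (p'' + 1) 1 (q + 1) k rfl (by omega)
        (by omega) (by omega) (by omega) (by omega)
      have hs1 : Summable (G 1 q (p''+2)) := summable_G (by omega) (by omega) (by omega)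
      have hs2 : Summable (G 1 (q+1) (p''+1)) := summable_G (by omega) (by omega) (by omega)
      have hrec : rz (q+1) * rz (p''+2) = T 1 q (p''+2) + T 1 (q+1) (p''+1) := by
        rw [T_eq, T_eq, ← prod_eval (show 2 ≤ q+1 by omega) (show 2 ≤ p''+2 by omega)]
        exact tsum_G_rec (a := 0) (b := q) (c := p''+1) hs1 hs2
      have h21 : Finset.Icc 2 (0+1) = (∅ : Finset ℕ) := Finset.Icc_eq_empty (by omega)
      have h21' : Finset.Icc 2 1 = (∅ : Finset ℕ) := Finset.Icc_eq_empty (by omega)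
      rw [h21, Finset.sum_empty]
      rw [h21', Finset.sum_empty] at hIH
      have e1 : 0+1+(p''+1+1)-2 = p''+1 := by omega
      have e2 : p''+1+1-1 = p''+1 := by omega
      have e3 : 1+(p''+1)-2 = p'' := by omega
      have e4 : p''+1-1 = p'' := by omega
      rw [e1, e2, Nat.choose_self] at *
      rw [e3, e4, Nat.choose_self] at hIH
      norm_num at hIH ⊢
      rw [Finset.sum_Icc_succ_top (show (2:ℕ) ≤ p''+1+1 by omega)]
      have hflip : ∀ i ∈ Finset.Icc 2 (p''+1), (-1:ℝ)^(p''+1+1-i) * (rz (k-i) * rz i)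
          = -((-1:ℝ)^(p''+1-i) * (rz (k-i) * rz i)) := by
        intro i hi
        simp only [mem_Icc] at hi
        rw [show p''+1+1-i = (p''+1-i)+1 from by omega, pow_succ]
        ring
      rw [Finset.sum_congr rfl hflip, Finset.sum_neg_distrib]
      have htop : p''+1+1-(p''+1+1) = 0 := by omega
      rw [htop, pow_zero, one_mul]
      have hkk : k - (p''+1+1) = q+1 := by omega
      rw [hkk]
      have hsgn : (-1:ℝ)^(p''+1+1+1) = -(-1:ℝ)^(p''+1+1) := by rw [pow_succ]; ring
      rw [hsgn]
      have hTT : T 1 q (p''+1+1) = T 1 q (p''+2) := rfl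
      rw [hTT]
      linarith [hrec, hIH]
    | p'' + 1, r'' + 1 =>
      have hIH1 := ih (p''+1+1 + (r''+1)) (by omega) (p''+1+1) (r''+1) (q+1) k rfl (by omega)
        (by omega) (by omega) (by omega) (by omega)
      have hIH2 := ih (p''+1 + (r''+1+1)) (by omega) (p''+1) (r''+1+1) (q+1) k rfl (by omega)
        (by omega) (by omega) (by omega) (by omega)
      have hs1 : Summable (G (r''+1+1) q (p''+1+1)) := summable_G (by omega) (by omega) (by omega)
      have hs2 : Summable (G (r''+1+1) (q+1) (p''+1)) := summable_G (by omega) (by omega) (by omega)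
      have hrec : T (r''+1) (q+1) (p''+1+1)
          = T (r''+1+1) q (p''+1+1) + T (r''+1+1) (q+1) (p''+1) := by
        rw [T_eq, T_eq, T_eq]
        exact tsum_G_rec (a := r''+1) (b := q) (c := p''+1) hs1 hs2
      have hI : ∑ i ∈ Finset.Icc 2 (p''+1+1), (-1:ℝ)^(p''+1+1-i) *
            ((r''+1+1+(p''+1+1)-i-1).choose (r''+1+1-1) : ℝ) * (rz (k-i) * rz i)
          = ∑ i ∈ Finset.Icc 2 (p''+1+1), (-1:ℝ)^(p''+1+1-i) *
              ((r''+1+(p''+1+1)-i-1).choose (r''+1-1) : ℝ) * (rz (k-i) * rz i)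
            - ∑ i ∈ Finset.Icc 2 (p''+1), (-1:ℝ)^(p''+1-i) *
              ((r''+1+1+(p''+1)-i-1).choose (r''+1+1-1) : ℝ) * (rz (k-i) * rz i) := by
        rw [Finset.sum_Icc_succ_top (show (2:ℕ) ≤ p''+1+1 by omega),
            Finset.sum_Icc_succ_top (show (2:ℕ) ≤ p''+1+1 by omega)]
        have hcomb : ∀ i ∈ Finset.Icc 2 (p''+1), (-1:ℝ)^(p''+1+1-i) *
              ((r''+1+1+(p''+1+1)-i-1).choose (r''+1+1-1) : ℝ) * (rz (k-i) * rz i)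
            = (-1:ℝ)^(p''+1+1-i) *
                ((r''+1+(p''+1+1)-i-1).choose (r''+1-1) : ℝ) * (rz (k-i) * rz i)
              - (-1:ℝ)^(p''+1-i) *
                ((r''+1+1+(p''+1)-i-1).choose (r''+1+1-1) : ℝ) * (rz (k-i) * rz i) := by
          intro i hi
          simp only [Finset.mem_Icc] at hi
          have c1 : r''+1+1+(p''+1+1)-i-1 = (r''+1+(p''+1+1)-i-1)+1 := by omega
          have c2 : r''+1+1-1 = (r''+1-1)+1 := by omega
          have c3 : r''+1+1+(p''+1)-i-1 = r''+1+(p''+1+1)-i-1 := by omega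
          have c4 : p''+1+1-i = (p''+1-i)+1 := by omega
          rw [c1, c2, c3, c4, Nat.choose_succ_succ]
          push_cast
          ring
        rw [Finset.sum_congr rfl hcomb, Finset.sum_sub_distrib]
        have e1 : p''+1+1-(p''+1+1) = 0 := by omega
        have e2 : r''+1+1+(p''+1+1)-(p''+1+1)-1 = r''+1 := by omega
        have e3 : r''+1+1-1 = r''+1 := by omega
        have e4 : r''+1+(p''+1+1)-(p''+1+1)-1 = r'' := by omega
        have e5 : r''+1-1 = r'' := by omega
        rw [e1, e2, e3, e4, e5, Nat.choose_self, Nat.choose_self]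
        ring
      have hII : ∑ i ∈ Finset.Icc 2 (r''+1+1),
            ((r''+1+1+(p''+1+1)-i-1).choose (p''+1+1-1) : ℝ) * dz i (k-i)
          = ∑ i ∈ Finset.Icc 2 (r''+1),
              ((r''+1+(p''+1+1)-i-1).choose (p''+1+1-1) : ℝ) * dz i (k-i)
            + ∑ i ∈ Finset.Icc 2 (r''+1+1),
              ((r''+1+1+(p''+1)-i-1).choose (p''+1-1) : ℝ) * dz i (k-i) := by
        rw [Finset.sum_Icc_succ_top (show (2:ℕ) ≤ r''+1+1 by omega),
            Finset.sum_Icc_succ_top (show (2:ℕ) ≤ r''+1+1 by omega)]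
        have hcomb2 : ∀ i ∈ Finset.Icc 2 (r''+1),
              ((r''+1+1+(p''+1+1)-i-1).choose (p''+1+1-1) : ℝ) * dz i (k-i)
            = ((r''+1+(p''+1+1)-i-1).choose (p''+1+1-1) : ℝ) * dz i (k-i)
              + ((r''+1+1+(p''+1)-i-1).choose (p''+1-1) : ℝ) * dz i (k-i) := by
          intro i hi
          simp only [Finset.mem_Icc] at hi
          have c1 : r''+1+1+(p''+1+1)-i-1 = (r''+1+1+(p''+1)-i-1)+1 := by omega
          have c2 : p''+1+1-1 = (p''+1-1)+1 := by omega
          have c3 : r''+1+(p''+1+1)-i-1 = r''+1+1+(p''+1)-i-1 := by omega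
          rw [c1, c2, c3, Nat.choose_succ_succ]
          push_cast
          ring
        rw [Finset.sum_congr rfl hcomb2, Finset.sum_add_distrib]
        have e1 : r''+1+1+(p''+1+1)-(r''+1+1)-1 = p''+1 := by omega
        have e2 : p''+1+1-1 = p''+1 := by omega
        have e3 : r''+1+1+(p''+1)-(r''+1+1)-1 = p'' := by omega
        have e4 : p''+1-1 = p'' := by omega
        rw [e1, e2, e3, e4, Nat.choose_self, Nat.choose_self]
        ring
      have hIII : ((r''+1+1+(p''+1+1)-2).choose (p''+1+1-1) : ℝ)
          = ((r''+1+(p''+1+1)-2).choose (p''+1+1-1) : ℝ)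
            + ((r''+1+1+(p''+1)-2).choose (p''+1-1) : ℝ) := by
        have d1 : r''+1+1+(p''+1+1)-2 = (r''+1+1+(p''+1)-2)+1 := by omega
        have d2 : p''+1+1-1 = (p''+1-1)+1 := by omega
        have d3 : r''+1+(p''+1+1)-2 = r''+1+1+(p''+1)-2 := by omega
        rw [d1, d2, d3, Nat.choose_succ_succ]
        push_cast
        ring
      linear_combination hIH1 - hIH2 - hrec - hI - (-1:ℝ)^(p''+1+1) * hII
        + (-1:ℝ)^(p''+1+1) * (T 1 (k-2) 1) * hIII
end MainSec

section FinSec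
open Finset

lemma dz_k11_eval {k : ℕ} (hk4 : 4 ≤ k) :
    dz (k-1) 1 = rz k - ∑ i ∈ Finset.Icc 2 (k-2), dz i (k-i) := by
  have hT11' : T 1 (k-2) 1 = rz k + dz (k-1) 1 := by
    rw [T_swap]
    rw [T11 (s := k-2) (by omega), show k-2+2 = k by omega, show k-2+1 = k-1 by omega]
  have hF4 : T (k-2) 1 1 = dz (k-1) 1 + dz (k-1) 1 := by
    have h1 : Summable (G (k-2+1) 0 (0+1)) := summable_G (by omega) (by omega) (by omega)
    have h2 : Summable (G (k-2+1) (0+1) 0) := summable_G (by omega) (by omega) (by omega)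
    have := tsum_G_rec (a := k-2) (b := 0) (c := 0) h1 h2
    rw [T_eq]
    rw [show (∑' x : ℕ × ℕ, G (k-2) 1 1 x) = ∑' x : ℕ × ℕ, G (k-2) (0+1) (0+1) x from rfl, this]
    rw [show k-2+1 = k-1 by omega]
    rw [dz_eq (k-1) 1]
    rw [show (∑' x : ℕ × ℕ, G (k-1) (0+1) 0 x) = ∑' x : ℕ × ℕ, G (k-1) 0 (0+1) x
      from tsum_G_swap (k-1) (0+1) 0]
  have hF3 := MAIN (1 + (k-2)) 1 (k-2) 1 k rfl (by omega) (by omega) (by omega) (by omega)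
    (by omega)
  have hempty : Finset.Icc 2 1 = (∅ : Finset ℕ) := Finset.Icc_eq_empty (by omega)
  rw [hempty, Finset.sum_empty] at hF3
  norm_num at hF3
  linarith [hT11', hF4, hF3]

lemma T1k21_eval {k : ℕ} (hk4 : 4 ≤ k) :
    T 1 (k-2) 1 = 2 * rz k - ∑ i ∈ Finset.Icc 2 (k-2), dz i (k-i) := by
  have hT11' : T 1 (k-2) 1 = rz k + dz (k-1) 1 := by
    rw [T_swap]
    rw [T11 (s := k-2) (by omega), show k-2+2 = k by omega, show k-2+1 = k-1 by omega]
  rw [hT11', dz_k11_eval hk4]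
  ring
end FinSec


end TornProof

open Finset TornProof in
theorem tornheim_boyadzhiev (p r q k : ℕ) (hp : 2 ≤ p) (hr : 1 ≤ r)
    (hqr : 2 ≤ q + r) (hk : k = p + q + r) :
    T r q p - (-1 : ℝ) ^ p *
        ∑ j ∈ Finset.Icc 1 (r - 1),
          ((p + r - j - 2).choose (p - 1) : ℝ) * dz (j + 1) (k - j - 1)
      ∈ Submodule.span ℚ
        ({rz k} ∪ {x : ℝ | ∃ j, 2 ≤ j ∧ j ≤ k - 2 ∧ x = rz j * rz (k - j)}) := by
  have hk4 : 4 ≤ k := by omega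
  set Gen : Set ℝ := {rz k} ∪ {x : ℝ | ∃ j, 2 ≤ j ∧ j ≤ k - 2 ∧ x = rz j * rz (k - j)} with hGen
  set M := Submodule.span ℚ Gen with hM
  have hrzk : rz k ∈ M := Submodule.subset_span (Or.inl rfl)
  have hprod : ∀ i : ℕ, 2 ≤ i → i ≤ k - 2 → rz i * rz (k - i) ∈ M := by
    intro i h1 h2
    exact Submodule.subset_span (Or.inr ⟨i, h1, h2, rfl⟩)
  have hsum_eq : ∑ j ∈ Finset.Icc 1 (r-1), ((p+r-j-2).choose (p-1) : ℝ) * dz (j+1) (k-j-1)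
      = ∑ i ∈ Finset.Icc 2 r, ((r+p-i-1).choose (p-1) : ℝ) * dz i (k-i) := by
    apply Finset.sum_nbij' (i := fun j => j + 1) (j := fun i => i - 1)
    · intro a ha; simp only [mem_Icc] at *; omega
    · intro a ha; simp only [mem_Icc] at *; omega
    · intro a ha; omega
    · intro a ha; simp only [mem_Icc] at ha; omega
    · intro a ha
      simp only [mem_Icc] at ha
      rw [show p+r-a-2 = r+p-(a+1)-1 from by omega, show k-a-1 = k-(a+1) from by omega]
  have hMAIN := MAIN (p + r) p r q k rfl (by omega) hr hqr hk4 (by omega)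
  rw [hsum_eq, hMAIN]
  have hET : ∀ A B C : ℝ, A + (-1:ℝ)^p * B + C - (-1:ℝ)^p * B = A + C := by
    intro A B C; ring
  rw [hET]
  apply Submodule.add_mem
  · apply Submodule.sum_mem
    intro i hi
    simp only [mem_Icc] at hi
    have hmem := hprod (k - i) (by omega) (by omega)
    rw [show k - (k - i) = i from by omega] at hmem
    have hsm : (-1:ℝ)^(p-i) * ((r+p-i-1).choose (r-1) : ℝ) * (rz (k-i) * rz i)
        = (((-1:ℚ)^(p-i) * ((r+p-i-1).choose (r-1) : ℚ)) : ℚ) • (rz (k-i) * rz i) := by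
      rw [Rat.smul_def]; push_cast; ring
    rw [hsm]
    exact Submodule.smul_mem _ _ hmem
  · rw [T1k21_eval hk4]
    have hS'mem : (∑ i ∈ Finset.Icc 2 (k-2), dz i (k-i)) ∈ M := by
      have hswap : ∑ i ∈ Finset.Icc 2 (k-2), dz i (k-i)
          = ∑ i ∈ Finset.Icc 2 (k-2), dz (k-i) i := by
        apply Finset.sum_nbij' (i := fun i => k - i) (j := fun i => k - i)
        · intro a ha; simp only [mem_Icc] at *; omega
        · intro a ha; simp only [mem_Icc] at *; omega
        · intro a ha; simp only [mem_Icc] at ha; omega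
        · intro a ha; simp only [mem_Icc] at ha; omega
        · intro a ha
          simp only [mem_Icc] at ha
          rw [show k-(k-a) = a from by omega]
      have h2S : (2:ℝ) * (∑ i ∈ Finset.Icc 2 (k-2), dz i (k-i))
          = ∑ i ∈ Finset.Icc 2 (k-2), (rz i * rz (k-i) - rz k) := by
        rw [two_mul]
        nth_rewrite 2 [hswap]
        rw [← Finset.sum_add_distrib]
        apply Finset.sum_congr rfl
        intro i hi
        simp only [mem_Icc] at hi
        have hrefl := reflect (a := i) (b := k - i) (by omega) (by omega)
        rw [show i + (k - i) = k from by omega] at hrefl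
        linarith
      have hsum_mem : (∑ i ∈ Finset.Icc 2 (k-2), (rz i * rz (k-i) - rz k)) ∈ M :=
        Submodule.sum_mem _ (fun i hi => by
          simp only [mem_Icc] at hi
          exact Submodule.sub_mem _ (hprod i (by omega) (by omega)) hrzk)
      have hhalf : (∑ i ∈ Finset.Icc 2 (k-2), dz i (k-i))
          = ((1/2 : ℚ)) • ((2:ℝ) * ∑ i ∈ Finset.Icc 2 (k-2), dz i (k-i)) := by
        rw [Rat.smul_def]; push_cast; ring
      rw [hhalf, h2S]
      exact Submodule.smul_mem _ _ hsum_mem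
    have hfin : (-1:ℝ)^(p+1) * ((r+p-2).choose (p-1) : ℝ) *
          (2 * rz k - ∑ i ∈ Finset.Icc 2 (k-2), dz i (k-i))
        = (((-1:ℚ)^(p+1) * ((r+p-2).choose (p-1) : ℚ) * 2) : ℚ) • rz k
          + ((-((-1:ℚ)^(p+1)) * ((r+p-2).choose (p-1) : ℚ)) : ℚ)
            • (∑ i ∈ Finset.Icc 2 (k-2), dz i (k-i)) := by
      rw [Rat.smul_def, Rat.smul_def]; push_cast; ring
    rw [hfin]
    exact Submodule.add_mem _ (Submodule.smul_mem _ _ hrzk) (Submodule.smul_mem _ _ hS'mem)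
end

section
/- If k is a multiple of 3 with k ≥ 6, then the Mordell value T(k/3, k/3, k/3) is a rational multiple of ζ(k). -/
open MeasureTheory Real Set Function
open scoped Nat

noncomputable def cc (a : ℕ) (n : ℕ) : ℝ := 1 / (n : ℝ) ^ a

lemma cc_nonneg (a n : ℕ) : 0 ≤ cc a n := by unfold cc; positivity

lemma cc_zero {a : ℕ} (ha : a ≠ 0) : cc a 0 = 0 := by
  simp [cc, zero_pow ha]

lemma cc_summable {a : ℕ} (ha : 2 ≤ a) : Summable (cc a) :=
  summable_one_div_nat_pow.mpr (by omega)

noncomputable def trip (a : ℕ) (p : (ℕ × ℕ) × ℕ) : ℝ := cc a p.1.1 * cc a p.1.2 * cc a p.2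

lemma trip_nonneg (a : ℕ) (p : (ℕ × ℕ) × ℕ) : 0 ≤ trip a p := by
  exact mul_nonneg (mul_nonneg (cc_nonneg _ _) (cc_nonneg _ _)) (cc_nonneg _ _)

lemma trip_summable {a : ℕ} (ha : 2 ≤ a) : Summable (trip a) := by
  have h2 : Summable (fun q : ℕ × ℕ => cc a q.1 * cc a q.2) :=
    (cc_summable ha).mul_of_nonneg (cc_summable ha) (fun n => cc_nonneg a n)
      (fun n => cc_nonneg a n)
  have h3 := h2.mul_of_nonneg (cc_summable ha)
      (fun q => mul_nonneg (cc_nonneg a q.1) (cc_nonneg a q.2)) (fun n => cc_nonneg a n)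
  exact h3

noncomputable def SS (a : ℕ) : ℝ := ∑' p : ℕ × ℕ, cc a p.1 * cc a p.2 * cc a (p.1 + p.2)

lemma T_eq_SS {a : ℕ} (ha : a ≠ 0) : T a a a = SS a := by
  unfold T SS
  refine (tsum_eq_tsum_of_ne_zero_bij (fun q => (q.1.1 + 1, q.1.2 + 1)) ?_ ?_ ?_).symm
  · intro x y h
    have h1 := congrArg Prod.fst h
    have h2 := congrArg Prod.snd h
    simp only at h1 h2
    ext <;> omega
  · -- support of SS summand ⊆ range
    rintro ⟨m, n⟩ hm
    simp only [mem_support] at hm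
    have hm0 : m ≠ 0 := by
      rintro rfl; exact hm (by simp [cc_zero ha])
    have hn0 : n ≠ 0 := by
      rintro rfl; exact hm (by simp [cc_zero ha])
    have hg : (fun x : ℕ × ℕ =>
        1 / (((x.1 : ℝ) + (x.2 : ℝ) + 2) ^ a * ((x.1 : ℝ) + 1) ^ a * ((x.2 : ℝ) + 1) ^ a))
        (m - 1, n - 1) ≠ 0 := by
      have : (0:ℝ) < (((m - 1 : ℕ) : ℝ) + ((n - 1 : ℕ) : ℝ) + 2) ^ a *
          (((m - 1 : ℕ) : ℝ) + 1) ^ a * (((n - 1 : ℕ) : ℝ) + 1) ^ a := by positivity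
      simp only [ne_eq, div_eq_zero_iff, one_ne_zero, false_or]
      exact ne_of_gt this
    refine ⟨⟨(m - 1, n - 1), hg⟩, ?_⟩
    simp only
    ext <;> simp <;> omega
  · rintro ⟨⟨m, n⟩, hx⟩
    simp only [cc]
    push_cast
    rw [one_div, one_div, one_div, one_div, mul_inv, mul_inv]
    ring_nf

lemma cos_triple (A B C : ℝ) :
    cos A * cos B * cos C =
      (cos (A + B + C) + cos (A + B - C) + cos (A - B + C) + cos (A - B - C)) / 4 := by
  simp only [Real.cos_add, Real.cos_sub, Real.sin_add, Real.sin_sub]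
  ring

lemma integral_cos_int (z : ℤ) :
    ∫ x in (0:ℝ)..1, cos (2 * π * (z : ℝ) * x) = if z = 0 then 1 else 0 := by
  by_cases hz : z = 0
  · simp [hz]
  · have hc : 2 * π * (z : ℝ) ≠ 0 := by
      have : (z : ℝ) ≠ 0 := Int.cast_ne_zero.mpr hz
      positivity
    rw [if_neg hz]
    have := intervalIntegral.integral_comp_mul_left (a := (0:ℝ)) (b := 1)
      (fun y => Real.cos y) hc
    simp only [mul_zero, mul_one] at this
    rw [this, integral_cos]
    have hs : Real.sin (2 * π * (z : ℝ)) = 0 := by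
      have : 2 * π * (z : ℝ) = ((2 * z : ℤ) : ℝ) * π := by push_cast; ring
      rw [this, Real.sin_int_mul_pi]
    simp [hs]

lemma J_eq (m n l : ℕ) :
    ∫ x in (0:ℝ)..1,
        cos (2 * π * m * x) * cos (2 * π * n * x) * cos (2 * π * l * x) =
      ((if (m : ℤ) + n + l = 0 then (1:ℝ) else 0) +
        (if (m : ℤ) + n - l = 0 then 1 else 0) +
        (if (m : ℤ) - n + l = 0 then 1 else 0) +
        (if (m : ℤ) - n - l = 0 then 1 else 0)) / 4 := by
  have h1 : ∀ x : ℝ,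
      cos (2 * π * m * x) * cos (2 * π * n * x) * cos (2 * π * l * x) =
        (cos (2 * π * (((m : ℤ) + n + l : ℤ) : ℝ) * x) +
          cos (2 * π * (((m : ℤ) + n - l : ℤ) : ℝ) * x) +
          cos (2 * π * (((m : ℤ) - n + l : ℤ) : ℝ) * x) +
          cos (2 * π * (((m : ℤ) - n - l : ℤ) : ℝ) * x)) / 4 := by
    intro x
    rw [cos_triple]
    push_cast
    ring_nf
  rw [intervalIntegral.integral_congr (fun x _ => h1 x)]
  have hInt : ∀ z : ℤ, IntervalIntegrable (fun x => cos (2 * π * (z : ℝ) * x))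
      volume 0 1 := fun z => (Real.continuous_cos.comp (by continuity)).intervalIntegrable 0 1
  rw [intervalIntegral.integral_div]
  rw [intervalIntegral.integral_add (((hInt _).add (hInt _)).add (hInt _)) (hInt _),
    intervalIntegral.integral_add ((hInt _).add (hInt _)) (hInt _),
    intervalIntegral.integral_add (hInt _) (hInt _)]
  rw [integral_cos_int, integral_cos_int, integral_cos_int, integral_cos_int]

lemma pointwise_key (a : ℕ) (ha : a ≠ 0) (m n l : ℕ) :
    cc a m * cc a n * cc a l *
        (((if (m : ℤ) + n + l = 0 then (1:ℝ) else 0) +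
          (if (m : ℤ) + n - l = 0 then 1 else 0) +
          (if (m : ℤ) - n + l = 0 then 1 else 0) +
          (if (m : ℤ) - n - l = 0 then 1 else 0)) / 4) =
      ((if m + n = l then cc a m * cc a n * cc a l else 0) +
        (if m = n + l then cc a m * cc a n * cc a l else 0) +
        (if n = m + l then cc a m * cc a n * cc a l else 0)) / 4 := by
  by_cases hm : m = 0
  · subst hm; simp [cc_zero ha]
  by_cases hn : n = 0
  · subst hn; simp [cc_zero ha]
  by_cases hl : l = 0
  · subst hl; simp [cc_zero ha]
  rw [if_neg (by omega : ¬((m : ℤ) + n + l = 0)),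
    if_congr (show ((m : ℤ) + n - l = 0) ↔ (m + n = l) by omega) rfl rfl,
    if_congr (show ((m : ℤ) - n + l = 0) ↔ (n = m + l) by omega) rfl rfl,
    if_congr (show ((m : ℤ) - n - l = 0) ↔ (m = n + l) by omega) rfl rfl]
  split_ifs <;> ring

lemma tsum_F1 (a : ℕ) :
    ∑' p : (ℕ × ℕ) × ℕ, (if p.1.1 + p.1.2 = p.2 then trip a p else 0) = SS a := by
  unfold SS
  refine tsum_eq_tsum_of_ne_zero_bij (fun q => ((q.1.1, q.1.2), q.1.1 + q.1.2)) ?_ ?_ ?_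
  · intro x y h
    simp only [Prod.mk.injEq] at h
    ext <;> simp [h.1.1, h.1.2]
  · rintro ⟨⟨m, n⟩, l⟩ hp
    simp only [mem_support] at hp
    by_cases hc : m + n = l
    · rw [if_pos hc] at hp
      refine ⟨⟨(m, n), ?_⟩, by simp [hc]⟩
      simpa [trip, hc] using hp
    · exact absurd (if_neg hc) hp
  · rintro ⟨⟨u, v⟩, hq⟩
    simp [trip]

lemma tsum_F2 (a : ℕ) :
    ∑' p : (ℕ × ℕ) × ℕ, (if p.1.1 = p.1.2 + p.2 then trip a p else 0) = SS a := by
  unfold SS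
  refine tsum_eq_tsum_of_ne_zero_bij (fun q => ((q.1.1 + q.1.2, q.1.1), q.1.2)) ?_ ?_ ?_
  · intro x y h
    simp only [Prod.mk.injEq] at h
    ext <;> simp [h.1.2, h.2]
  · rintro ⟨⟨m, n⟩, l⟩ hp
    simp only [mem_support] at hp
    by_cases hc : m = n + l
    · rw [if_pos hc] at hp
      refine ⟨⟨(n, l), ?_⟩, by simp [hc]⟩
      simp only [mem_support]
      intro h
      apply hp
      rw [trip]
      simp only [hc]
      rw [show cc a (n + l) * cc a n * cc a l = cc a n * cc a l * cc a (n + l) by ring, h]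
    · exact absurd (if_neg hc) hp
  · rintro ⟨⟨u, v⟩, hq⟩
    simp [trip]
    ring

lemma tsum_F3 (a : ℕ) :
    ∑' p : (ℕ × ℕ) × ℕ, (if p.1.2 = p.1.1 + p.2 then trip a p else 0) = SS a := by
  unfold SS
  refine tsum_eq_tsum_of_ne_zero_bij (fun q => ((q.1.1, q.1.1 + q.1.2), q.1.2)) ?_ ?_ ?_
  · intro x y h
    simp only [Prod.mk.injEq] at h
    ext <;> simp [h.1.1, h.2]
  · rintro ⟨⟨m, n⟩, l⟩ hp
    simp only [mem_support] at hp
    by_cases hc : n = m + l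
    · rw [if_pos hc] at hp
      refine ⟨⟨(m, l), ?_⟩, by simp [hc]⟩
      simp only [mem_support]
      intro h
      apply hp
      rw [trip]
      simp only [hc]
      rw [show cc a m * cc a (m + l) * cc a l = cc a m * cc a l * cc a (m + l) by ring, h]
    · exact absurd (if_neg hc) hp
  · rintro ⟨⟨u, v⟩, hq⟩
    simp [trip]
    ring

noncomputable def ww (a n : ℕ) (x : ℝ) : ℝ := cc a n * cos (2 * π * n * x)

noncomputable def FF (a : ℕ) (p : (ℕ × ℕ) × ℕ) (x : ℝ) : ℝ :=
  ww a p.1.1 x * ww a p.1.2 x * ww a p.2 x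

lemma ww_norm_le (a n : ℕ) (x : ℝ) : ‖ww a n x‖ ≤ cc a n := by
  rw [ww]
  simp only [norm_mul, Real.norm_eq_abs, abs_of_nonneg (cc_nonneg a n)]
  calc cc a n * |cos (2 * π * n * x)| ≤ cc a n * 1 :=
        mul_le_mul_of_nonneg_left (Real.abs_cos_le_one _) (cc_nonneg a n)
    _ = cc a n := mul_one _

lemma ww_norm_summable {a : ℕ} (ha : 2 ≤ a) (x : ℝ) : Summable (fun n => ‖ww a n x‖) :=
  Summable.of_nonneg_of_le (fun n => norm_nonneg _) (fun n => ww_norm_le a n x)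
    (cc_summable ha)

lemma ww_continuous (a n : ℕ) : Continuous (ww a n) :=
  continuous_const.mul (Real.continuous_cos.comp (continuous_const.mul continuous_id))

lemma core_integral (j : ℕ) (hj : j ≠ 0) :
    ∫ x in Ioc (0:ℝ) 1,
        ((-1 : ℝ) ^ (j + 1) * (2 * π) ^ (2 * j) / 2 / (2 * j)! *
          (Polynomial.map (algebraMap ℚ ℝ) (Polynomial.bernoulli (2 * j))).eval x) ^ 3
      = (3 / 4) * SS (2 * j) := by
  have ha2 : 2 ≤ 2 * j := by omega
  have ha0 : 2 * j ≠ 0 := by omega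
  set a := 2 * j with ha
  set C : ℝ := (-1 : ℝ) ^ (j + 1) * (2 * π) ^ (2 * j) / 2 / (2 * j)! with hC
  set B : ℝ → ℝ := fun x =>
    (Polynomial.map (algebraMap ℚ ℝ) (Polynomial.bernoulli (2 * j))).eval x with hBdef
  have hB : ∀ x ∈ Icc (0:ℝ) 1, HasSum (fun n => ww a n x) (C * B x) := by
    intro x hx
    exact hasSum_one_div_nat_pow_mul_cos hj hx
  have hsum3 : ∀ x ∈ Icc (0:ℝ) 1, (∑' p, FF a p x) = (C * B x) ^ 3 := by
    intro x hx
    have h1 := hB x hx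
    have hs := ww_norm_summable ha2
    have e1 : (∑' q : ℕ × ℕ, (ww a q.1 x * ww a q.2 x)) = (C * B x) * (C * B x) := by
      rw [← tsum_mul_tsum_of_summable_norm (hs x) (hs x), h1.tsum_eq]
    have e2 : (∑' p : (ℕ × ℕ) × ℕ, ((ww a p.1.1 x * ww a p.1.2 x) * ww a p.2 x)) =
        ((C * B x) * (C * B x)) * (C * B x) := by
      rw [← e1, ← h1.tsum_eq, tsum_mul_tsum_of_summable_norm ((hs x).mul_norm (hs x)) (hs x)]
    calc (∑' p, FF a p x) = ((C * B x) * (C * B x)) * (C * B x) := e2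
      _ = (C * B x) ^ 3 := by ring
  have hFc : ∀ p, Continuous (FF a p) := fun p =>
    ((ww_continuous _ _).mul (ww_continuous _ _)).mul (ww_continuous _ _)
  have hFi : ∀ p, Integrable (FF a p) (volume.restrict (Ioc (0:ℝ) 1)) := fun p =>
    (hFc p).integrableOn_Ioc
  have hbound : ∀ p, ∫ x in Ioc (0:ℝ) 1, ‖FF a p x‖ ≤ trip a p := by
    intro p
    have h1 : ∫ x in Ioc (0:ℝ) 1, ‖FF a p x‖ ≤ ∫ _x in Ioc (0:ℝ) 1, trip a p := by
      refine integral_mono (hFi p).norm (integrable_const _) ?_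
      intro x
      simp only [FF, norm_mul]
      calc ‖ww a p.1.1 x‖ * ‖ww a p.1.2 x‖ * ‖ww a p.2 x‖
          ≤ cc a p.1.1 * cc a p.1.2 * cc a p.2 := by
            gcongr <;> first | exact mul_nonneg (cc_nonneg _ _) (cc_nonneg _ _) | exact cc_nonneg _ _ | exact norm_nonneg _ | exact ww_norm_le _ _ _
        _ = trip a p := rfl
    calc ∫ x in Ioc (0:ℝ) 1, ‖FF a p x‖ ≤ ∫ _x in Ioc (0:ℝ) 1, trip a p := h1
      _ = trip a p := by simp [Real.volume_Ioc]
  have hsummInt : Summable fun p => ∫ x in Ioc (0:ℝ) 1, ‖FF a p x‖ :=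
    Summable.of_nonneg_of_le (fun p => integral_nonneg (fun x => norm_nonneg _))
      hbound (trip_summable ha2)
  calc ∫ x in Ioc (0:ℝ) 1, (C * B x) ^ 3
      = ∫ x in Ioc (0:ℝ) 1, ∑' p, FF a p x :=
        setIntegral_congr_fun measurableSet_Ioc
          (fun x hx => (hsum3 x (Ioc_subset_Icc_self hx)).symm)
    _ = ∑' p, ∫ x in Ioc (0:ℝ) 1, FF a p x :=
        (integral_tsum_of_summable_integral_norm hFi hsummInt).symm
    _ = ∑' p : (ℕ × ℕ) × ℕ, trip a p *
          (((if (p.1.1 : ℤ) + p.1.2 + p.2 = 0 then (1:ℝ) else 0) +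
            (if (p.1.1 : ℤ) + p.1.2 - p.2 = 0 then 1 else 0) +
            (if (p.1.1 : ℤ) - p.1.2 + p.2 = 0 then 1 else 0) +
            (if (p.1.1 : ℤ) - p.1.2 - p.2 = 0 then 1 else 0)) / 4) := by
        refine tsum_congr fun p => ?_
        rw [← intervalIntegral.integral_of_le zero_le_one]
        have hpt : ∀ x : ℝ, FF a p x = trip a p *
            (cos (2 * π * p.1.1 * x) * cos (2 * π * p.1.2 * x) * cos (2 * π * p.2 * x)) := by
          intro x
          simp only [FF, ww, trip]
          ring
        rw [intervalIntegral.integral_congr (fun x _ => hpt x),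
          intervalIntegral.integral_const_mul, J_eq]
    _ = ∑' p : (ℕ × ℕ) × ℕ,
          ((if p.1.1 + p.1.2 = p.2 then trip a p else 0) +
            (if p.1.1 = p.1.2 + p.2 then trip a p else 0) +
            (if p.1.2 = p.1.1 + p.2 then trip a p else 0)) / 4 := by
        refine tsum_congr fun p => ?_
        exact pointwise_key a ha0 p.1.1 p.1.2 p.2
    _ = (3 / 4) * SS a := by
        have sgen : ∀ c : (ℕ × ℕ) × ℕ → Prop, ∀ _inst : DecidablePred c,
            Summable fun p : (ℕ × ℕ) × ℕ => (if c p then trip a p else 0) := by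
          intro c _
          refine Summable.of_nonneg_of_le
            (fun p => ?_) (fun p => ?_) (trip_summable ha2)
          · split_ifs; exacts [trip_nonneg a p, le_refl 0]
          · split_ifs; exacts [le_refl _, trip_nonneg a p]
        have s1 := sgen (fun p => p.1.1 + p.1.2 = p.2) (fun p => inferInstance)
        have s2 := sgen (fun p => p.1.1 = p.1.2 + p.2) (fun p => inferInstance)
        have s3 := sgen (fun p => p.1.2 = p.1.1 + p.2) (fun p => inferInstance)
        rw [tsum_div_const, Summable.tsum_add (s1.add s2) s3, Summable.tsum_add s1 s2,
          tsum_F1, tsum_F2, tsum_F3]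
        ring

lemma rat_poly_integral (P : Polynomial ℚ) :
    ∃ q : ℚ, ∫ x in (0:ℝ)..1, (P.map (algebraMap ℚ ℝ)).eval x = (q : ℝ) := by
  refine ⟨∑ i ∈ Finset.range (P.natDegree + 1), P.coeff i / (i + 1), ?_⟩
  have hdeg : (P.map (algebraMap ℚ ℝ)).natDegree = P.natDegree :=
    Polynomial.natDegree_map_eq_of_injective (algebraMap ℚ ℝ).injective P
  have heval : ∀ x : ℝ, (P.map (algebraMap ℚ ℝ)).eval x =
      ∑ i ∈ Finset.range (P.natDegree + 1), (P.coeff i : ℝ) * x ^ i := by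
    intro x
    rw [Polynomial.eval_eq_sum_range, hdeg]
    refine Finset.sum_congr rfl fun i _ => ?_
    rw [Polynomial.coeff_map, eq_ratCast]
  rw [intervalIntegral.integral_congr (fun x _ => heval x)]
  rw [intervalIntegral.integral_finsetSum (f := fun i x => (P.coeff i : ℝ) * x ^ i)
    (fun i _ => ((continuous_const.mul (continuous_pow i)).intervalIntegrable 0 1))]
  simp only [intervalIntegral.integral_const_mul, integral_pow, one_pow,
    zero_pow (Nat.succ_ne_zero _)]
  push_cast
  refine Finset.sum_congr rfl fun i _ => ?_
  ring

lemma SS_rat (j : ℕ) (hj : j ≠ 0) : ∃ r : ℚ, SS (2 * j) = (r : ℝ) * π ^ (6 * j) := by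
  obtain ⟨q, hq⟩ := rat_poly_integral ((Polynomial.bernoulli (2 * j)) ^ 3)
  have hcore := core_integral j hj
  set C : ℝ := (-1 : ℝ) ^ (j + 1) * (2 * π) ^ (2 * j) / 2 / (2 * j)! with hC
  have h1 : ∫ x in Ioc (0:ℝ) 1,
      (C * (Polynomial.map (algebraMap ℚ ℝ) (Polynomial.bernoulli (2 * j))).eval x) ^ 3
      = C ^ 3 * (q : ℝ) := by
    rw [← intervalIntegral.integral_of_le zero_le_one]
    have hpt : ∀ x : ℝ,
        (C * (Polynomial.map (algebraMap ℚ ℝ) (Polynomial.bernoulli (2 * j))).eval x) ^ 3 =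
          C ^ 3 * ((Polynomial.bernoulli (2 * j) ^ 3).map (algebraMap ℚ ℝ)).eval x := by
      intro x
      rw [Polynomial.map_pow, Polynomial.eval_pow]
      ring
    rw [intervalIntegral.integral_congr (fun x _ => hpt x),
      intervalIntegral.integral_const_mul, hq]
  rw [h1] at hcore
  refine ⟨(4 / 3) * ((-1 : ℚ) ^ (j + 1)) ^ 3 * 2 ^ (6 * j) * q / (8 * ((2 * j)! : ℚ) ^ 3), ?_⟩
  have hSS : SS (2 * j) = (4 / 3) * (C ^ 3 * (q : ℝ)) := by
    rw [hcore]; ring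
  rw [hSS, hC]
  have hfact : ((2 * j)! : ℝ) ≠ 0 := Nat.cast_ne_zero.mpr (Nat.factorial_ne_zero _)
  push_cast
  have h2pi : ((2 * π) ^ (2 * j)) ^ 3 = 2 ^ (6 * j) * π ^ (6 * j) := by
    rw [← pow_mul, show 2 * j * 3 = 6 * j by ring, mul_pow]
  field_simp
  rw [h2pi]
  ring

lemma rz_form (N : ℕ) (hN : N ≠ 0) :
    ∃ s : ℚ, rz (2 * N) = (s : ℝ) * π ^ (2 * N) ∧ 0 < rz (2 * N) := by
  have hV := hasSum_zeta_nat hN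
  have hshift : HasSum (fun n : ℕ => 1 / (((n + 1 : ℕ) : ℝ)) ^ (2 * N))
      ((-1 : ℝ) ^ (N + 1) * 2 ^ (2 * N - 1) * π ^ (2 * N) * (bernoulli (2 * N) : ℝ) /
        (2 * N)!) := by
    refine (hasSum_nat_add_iff (f := fun n : ℕ => 1 / ((n : ℝ)) ^ (2 * N)) 1).mpr ?_
    simpa [zero_pow (by omega : 2 * N ≠ 0)] using hV
  have hshift' : HasSum (fun n : ℕ => 1 / ((n : ℝ) + 1) ^ (2 * N))
      ((-1 : ℝ) ^ (N + 1) * 2 ^ (2 * N - 1) * π ^ (2 * N) * (bernoulli (2 * N) : ℝ) /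
        (2 * N)!) := by
    refine hshift.congr_fun ?_
    intro n
    push_cast
    ring_nf
  have hrz : rz (2 * N) = (-1 : ℝ) ^ (N + 1) * 2 ^ (2 * N - 1) * π ^ (2 * N) *
      (bernoulli (2 * N) : ℝ) / (2 * N)! := hshift'.tsum_eq
  have hpos : 0 < rz (2 * N) := by
    rw [rz]
    refine Summable.tsum_pos hshift'.summable (fun n => by positivity) 0 (by norm_num)
  refine ⟨(-1 : ℚ) ^ (N + 1) * 2 ^ (2 * N - 1) * (bernoulli (2 * N)) / (2 * N)!, ?_, hpos⟩
  rw [hrz]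
  push_cast
  ring

theorem mordell_value (k : ℕ) (hk : Even k) (h3 : 3 ∣ k) (h6 : 6 ≤ k) :
    ∃ c : ℚ, T (k / 3) (k / 3) (k / 3) = (c : ℝ) * rz k := by
  obtain ⟨u, hu⟩ := hk
  obtain ⟨t, ht⟩ := h3
  obtain ⟨j, rfl⟩ : ∃ j, k = 6 * j := ⟨k / 6, by omega⟩
  have hj : j ≠ 0 := by omega
  rw [show 6 * j / 3 = 2 * j by omega]
  have hT : T (2 * j) (2 * j) (2 * j) = SS (2 * j) := T_eq_SS (by omega)
  obtain ⟨r, hr⟩ := SS_rat j hj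
  obtain ⟨s, hs, hpos⟩ := rz_form (3 * j) (by omega)
  rw [show 2 * (3 * j) = 6 * j by ring] at hs hpos
  have hsne : (s : ℝ) ≠ 0 := by
    intro h
    rw [h, zero_mul] at hs
    exact absurd hs (ne_of_gt hpos)
  refine ⟨r / s, ?_⟩
  rw [hT, hr, hs]
  push_cast
  field_simp
end
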